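/- arXiv:2005.07275 — 2 statements merged into one kernel-verified Lean document; each statement's English description precedes it below -/
import Mathlib

section
/- With Gaussian measure ν = N(μ, Σ), Σ = LLᵀ a Cholesky factorization, the functions g₁(x) = exp(-L⁻¹(x−μ)) (componentwise) and g₂(x) = exp(-√((1/2)DᵀD)·vech(L⁻¹(x−μ)(x−μ)ᵀL⁻ᵀ)) (componentwise) form an orthonormal basis of the indefinite-Gaussian subspace G under the Bayes-space inner product: ⟨g, g⟩ = Identity. -/
open MeasureTheory Real Matrix

noncomputable section

/-- The Bayes-space inner product `⟨p₁,p₂⟩ = E_ν[ln p₁ ln p₂] − E_ν[ln p₁]E_ν[ln p₂]`. -/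
def bip {X : Type*} [MeasurableSpace X] (ν : Measure X) (p q : X → ℝ) : ℝ :=
  (∫ x, Real.log (p x) * Real.log (q x) ∂ν) -
    (∫ x, Real.log (p x) ∂ν) * (∫ x, Real.log (q x) ∂ν)

/-- The Gaussian measure `N(μ, Σ)` on `ℝᴺ`, given by its density w.r.t. Lebesgue measure. -/
def gaussPi (N : ℕ) (μ : Fin N → ℝ) (S : Matrix (Fin N) (Fin N) ℝ) : Measure (Fin N → ℝ) :=
  volume.withDensity fun x => ENNReal.ofReal
    ((Real.sqrt ((2 * π) ^ N * S.det))⁻¹ *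
      Real.exp (-(1 / 2) * ((x - μ) ⬝ᵥ S⁻¹.mulVec (x - μ))))

/-- First block of the orthonormal indefinite-Gaussian basis:
`g₁ᵢ(x) = exp (-(L⁻¹(x−μ))ᵢ)`. -/
def gOne (N : ℕ) (μ : Fin N → ℝ) (L : Matrix (Fin N) (Fin N) ℝ) (i : Fin N) :
    (Fin N → ℝ) → ℝ :=
  fun x => Real.exp (-(L⁻¹.mulVec (x - μ)) i)

/-- Second block of the orthonormal indefinite-Gaussian basis:
`g₂ₖ(x) = exp (-(√((1/2)DᵀD)·vech (L⁻¹(x−μ)(x−μ)ᵀL⁻ᵀ))ₖ)`, where `R = √((1/2)DᵀD)` and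
`vech` is the half-vectorization. -/
def gTwo (N M : ℕ) (μ : Fin N → ℝ) (L : Matrix (Fin N) (Fin N) ℝ)
    (vech : Matrix (Fin N) (Fin N) ℝ → Fin M → ℝ) (R : Matrix (Fin M) (Fin M) ℝ)
    (k : Fin M) : (Fin N → ℝ) → ℝ :=
  fun x => Real.exp (-(R.mulVec (vech (L⁻¹ * vecMulVec (x - μ) (x - μ) * (L⁻¹)ᵀ))) k)

open Set Filter Topology
open scoped NNReal ENNReal


/-- 1D Gaussian monomial integrand. -/
def gm (n : ℕ) : ℝ → ℝ := fun x => x ^ n * Real.exp (-(2⁻¹ * x ^ 2))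

lemma integrable_gm (n : ℕ) : Integrable (gm n) := by
  have := integrable_rpow_mul_exp_neg_mul_sq (b := (2⁻¹:ℝ)) (by norm_num) (s := (n:ℝ))
    (lt_of_lt_of_le neg_one_lt_zero (by positivity))
  unfold gm
  simpa [gm, Real.rpow_natCast, neg_mul] using this

lemma continuous_gm (n : ℕ) : Continuous (gm n) := by
  unfold gm; fun_prop

lemma gm_neg (n : ℕ) (x : ℝ) : gm n (-x) = (-1 : ℝ) ^ n * gm n x := by
  simp only [gm, neg_sq]
  rw [neg_pow]
  ring

lemma gm_odd_int (n : ℕ) (hn : Odd n) : ∫ x, gm n x = 0 := by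
  have h2 : ∫ x, gm n (-x) = ∫ x, gm n x :=
    (Measure.measurePreserving_neg (volume : Measure ℝ)).integral_comp
      (Homeomorph.neg ℝ).measurableEmbedding (gm n)
  have h3 : ∫ x, gm n (-x) = - ∫ x, gm n x := by
    simp_rw [gm_neg, hn.neg_one_pow, neg_one_mul]
    exact integral_neg _
  linarith [h2, h3]

lemma tendsto_gm_atTop (n : ℕ) : Tendsto (gm n) atTop (𝓝 0) := by
  have h := rpow_mul_exp_neg_mul_sq_isLittleO_exp_neg (b := (2⁻¹:ℝ)) (by norm_num) (n : ℝ)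
  have h1 : Tendsto (fun x : ℝ => -(1/2) * x) atTop atBot := by
    apply Filter.Tendsto.const_mul_atTop_of_neg (by norm_num)
    exact tendsto_id
  have h2 : Tendsto (fun x : ℝ => Real.exp (-(1/2) * x)) atTop (𝓝 (0:ℝ)) :=
    Real.tendsto_exp_atBot.comp h1
  have h3 := h.trans_tendsto h2
  have heq : (fun x : ℝ => x ^ (n:ℝ) * Real.exp (-(2⁻¹:ℝ) * x ^ 2)) =ᶠ[atTop] gm n := by
    filter_upwards [eventually_gt_atTop (0:ℝ)] with x hx
    simp [gm, Real.rpow_natCast, neg_mul]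
  exact h3.congr' heq

lemma tendsto_gm_atBot (n : ℕ) : Tendsto (gm n) atBot (𝓝 0) := by
  have h : Tendsto (fun x : ℝ => gm n (-x)) atTop (𝓝 (0:ℝ)) := by
    simp_rw [gm_neg]
    simpa using (tendsto_gm_atTop n).const_mul ((-1:ℝ)^n)
  have := h.comp tendsto_neg_atBot_atTop
  simpa [Function.comp_def] using this

lemma gm_step (n : ℕ) : ∫ x, gm (n+2) x = (n+1) * ∫ x, gm n x := by
  set F : ℝ → ℝ := fun x => -(x ^ (n+1) * Real.exp (-(2⁻¹ * x ^ 2))) with hF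
  have hderiv : ∀ x : ℝ, HasDerivAt F (gm (n+2) x - (n+1) * gm n x) x := by
    intro x
    have h1 : HasDerivAt (fun x : ℝ => x ^ (n+1)) ((n+1 : ℕ) * x ^ n) x := by
      simpa using hasDerivAt_pow (n+1) x
    have h2 : HasDerivAt (fun x : ℝ => Real.exp (-(2⁻¹ * x ^ 2)))
        (Real.exp (-(2⁻¹ * x ^ 2)) * (-(2⁻¹:ℝ) * (2 * x))) x := by
      have := ((hasDerivAt_pow 2 x).const_mul (-(2⁻¹:ℝ))).exp
      simpa [neg_mul] using this
    have h3 := (h1.mul h2).neg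
    refine h3.congr_deriv ?_
    simp only [gm]
    push_cast
    ring
  have hint : Integrable (fun x => gm (n+2) x - (n+1) * gm n x) :=
    (integrable_gm (n+2)).sub ((integrable_gm n).const_mul _)
  have hbot : Tendsto F atBot (𝓝 (0:ℝ)) := by
    have := (tendsto_gm_atBot (n+1)).neg
    simpa [hF, gm] using this
  have htop : Tendsto F atTop (𝓝 (0:ℝ)) := by
    have := (tendsto_gm_atTop (n+1)).neg
    simpa [hF, gm] using this
  have hIic : ∫ x in Iic (0:ℝ), (gm (n+2) x - (n+1) * gm n x) = F 0 - 0 :=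
    integral_Iic_of_hasDerivAt_of_tendsto
      (Continuous.continuousWithinAt (by unfold F; fun_prop))
      (fun x _ => hderiv x) hint.integrableOn hbot
  have hIoi : ∫ x in Ioi (0:ℝ), (gm (n+2) x - (n+1) * gm n x) = 0 - F 0 :=
    integral_Ioi_of_hasDerivAt_of_tendsto
      (Continuous.continuousWithinAt (by unfold F; fun_prop))
      (fun x _ => hderiv x) hint.integrableOn htop
  have hsplit := intervalIntegral.integral_Iic_add_Ioi (b := (0:ℝ))
    hint.integrableOn hint.integrableOn
  have h0 : ∫ x, (gm (n+2) x - (n+1) * gm n x) = 0 := by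
    rw [← hsplit, hIic, hIoi]; ring
  have h4 := integral_sub (integrable_gm (n+2)) ((integrable_gm n).const_mul ((n:ℝ)+1))
  rw [integral_const_mul] at h4
  rw [h4] at h0
  linarith

lemma gm_zero_int : ∫ x, gm 0 x = Real.sqrt (2 * π) := by
  have h := integral_gaussian (2⁻¹ : ℝ)
  simp only [gm, pow_zero, one_mul, neg_mul] at h ⊢
  rw [h]
  rw [div_eq_mul_inv, inv_inv, mul_comm]

lemma gm_one_int : ∫ x, gm 1 x = 0 := gm_odd_int 1 ⟨0, by norm_num⟩
lemma gm_two_int : ∫ x, gm 2 x = Real.sqrt (2 * π) := by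
  have := gm_step 0; rw [gm_zero_int] at this; simpa using this
lemma gm_three_int : ∫ x, gm 3 x = 0 := gm_odd_int 3 ⟨1, by norm_num⟩
lemma gm_four_int : ∫ x, gm 4 x = 3 * Real.sqrt (2 * π) := by
  have := gm_step 2; rw [gm_two_int] at this
  rw [this]; norm_num

open Matrix
open scoped NNReal ENNReal

/-- normalized 1D Gaussian moments -/
def Gm (n : ℕ) : ℝ := (Real.sqrt (2 * π))⁻¹ * ∫ t, gm n t

lemma sqrt_two_pi_pos : 0 < Real.sqrt (2 * π) := Real.sqrt_pos.2 (by positivity)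

lemma Gm_zero : Gm 0 = 1 := by rw [Gm, gm_zero_int]; field_simp
lemma Gm_one : Gm 1 = 0 := by rw [Gm, gm_one_int]; ring
lemma Gm_two : Gm 2 = 1 := by rw [Gm, gm_two_int]; field_simp
lemma Gm_three : Gm 3 = 0 := by rw [Gm, gm_three_int]; ring
lemma Gm_four : Gm 4 = 3 := by
  rw [Gm, gm_four_int, mul_comm, mul_assoc, mul_inv_cancel₀ (ne_of_gt sqrt_two_pi_pos), mul_one]

lemma sqrt_pow_nat (a : ℝ) (h : 0 ≤ a) (n : ℕ) : Real.sqrt (a ^ n) = (Real.sqrt a) ^ n := by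
  induction n with
  | zero => simp
  | succ n ih => rw [pow_succ, pow_succ, Real.sqrt_mul (by positivity), ih]

section Master

variable {N : ℕ} (μ : Fin N → ℝ) (L : Matrix (Fin N) (Fin N) ℝ)

lemma cont_mulVec (A : Matrix (Fin N) (Fin N) ℝ) (i : Fin N) :
    Continuous (fun x : Fin N → ℝ => (A.mulVec (x - μ)) i) := by
  simp only [Matrix.mulVec, dotProduct]
  apply continuous_finset_sum
  intro j _
  exact (continuous_const.mul ((continuous_apply j).sub continuous_const))

lemma gaussPi_density (S : Matrix (Fin N) (Fin N) ℝ) :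
    gaussPi N μ S = volume.withDensity (fun x =>
      (((fun x => ((Real.sqrt ((2 * π) ^ N * S.det))⁻¹ *
        Real.exp (-(1 / 2) * ((x - μ) ⬝ᵥ S⁻¹.mulVec (x - μ)))).toNNReal) x : ℝ≥0) : ℝ≥0∞)) :=
  rfl

/-- Master change-of-variables lemma. -/
lemma gauss_master (hL : IsUnit L.det) (g : Fin N → ℝ → ℝ) (hc : ∀ i, Continuous (g i))
    (hi : ∀ i, Integrable (fun t => g i t * Real.exp (-(2⁻¹ * t ^ 2)))) :
    Integrable (fun x => ∏ i, g i ((L⁻¹.mulVec (x - μ)) i)) (gaussPi N μ (L * Lᵀ)) ∧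
    ∫ x, ∏ i, g i ((L⁻¹.mulVec (x - μ)) i) ∂(gaussPi N μ (L * Lᵀ)) =
      ∏ i, ((Real.sqrt (2 * π))⁻¹ * ∫ t, g i t * Real.exp (-(2⁻¹ * t ^ 2))) := by
  classical
  have hdet : L.det ≠ 0 := by
    intro h; rw [h] at hL; simpa using hL.ne_zero
  have habs : |L.det| ≠ 0 := abs_ne_zero.2 hdet
  set ρ : (Fin N → ℝ) → ℝ := fun x => ((Real.sqrt ((2 * π) ^ N * (L * Lᵀ).det))⁻¹ *
        Real.exp (-(1 / 2) * ((x - μ) ⬝ᵥ (L * Lᵀ)⁻¹.mulVec (x - μ)))) with hρ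
  have hρnn : ∀ x, 0 ≤ ρ x := fun x =>
    mul_nonneg (inv_nonneg.2 (Real.sqrt_nonneg _)) (Real.exp_nonneg _)
  have hρcont : Continuous ρ := by
    apply Continuous.mul continuous_const
    apply Real.continuous_exp.comp
    apply Continuous.mul continuous_const
    simp only [dotProduct]
    apply continuous_finset_sum
    intro j _
    exact ((continuous_apply j).sub continuous_const).mul (cont_mulVec μ _ j)
  set F : (Fin N → ℝ) → ℝ := fun x => ∏ i, g i ((L⁻¹.mulVec (x - μ)) i) with hFdef
  have hFcont : Continuous F := by
    apply continuous_finset_prod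
    intro i _
    exact (hc i).comp (cont_mulVec μ L⁻¹ i)
  set G : (Fin N → ℝ) → ℝ := fun x => ρ x * F x with hGdef
  have hGcont : Continuous G := hρcont.mul hFcont
  -- step 1 : withDensity
  have hmeasρ : Measurable fun x => (ρ x).toNNReal := hρcont.measurable.real_toNNReal
  have step1 : ∫ x, F x ∂(gaussPi N μ (L * Lᵀ)) = ∫ x, G x := by
    rw [gaussPi_density, integral_withDensity_eq_integral_smul hmeasρ]
    congr 1
    funext x
    simp [hGdef, NNReal.smul_def, Real.coe_toNNReal _ (hρnn x)]
  have step1' : Integrable F (gaussPi N μ (L * Lᵀ)) ↔ Integrable G volume := by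
    rw [gaussPi_density, integrable_withDensity_iff_integrable_smul hmeasρ]
    apply integrable_congr
    filter_upwards with x
    simp [hGdef, NNReal.smul_def, Real.coe_toNNReal _ (hρnn x)]
  -- step 2 : translation
  set H : (Fin N → ℝ) → ℝ := fun y => G (y + μ) with hHdef
  have hHcont : Continuous H := hGcont.comp (continuous_id.add continuous_const)
  have step2 : ∫ x, G x = ∫ y, H y := (integral_add_right_eq_self G μ).symm
  have step2' : Integrable G volume ↔ Integrable H volume := by
    constructor
    · intro h; exact h.comp_add_right μ
    · intro h
      have := h.comp_add_right (-μ)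
      simpa [hHdef] using this
  -- step 3 : linear change of variables
  have hTmeas : Measurable (Matrix.toLin' L) :=
    (LinearMap.continuous_on_pi _).measurable
  have hmapMeas : Measure.map (Matrix.toLin' L) (volume : Measure (Fin N → ℝ)) =
      ENNReal.ofReal |L.det⁻¹| • volume :=
    Real.map_matrix_volume_pi_eq_smul_volume_pi hdet
  have h1 : ∫ y, H y ∂(Measure.map (Matrix.toLin' L) volume) = ∫ ξ, H (L.mulVec ξ) := by
    rw [integral_map hTmeas.aemeasurable hHcont.aestronglyMeasurable]
    simp [Matrix.toLin'_apply]
  have h1' : ∫ y, H y ∂(Measure.map (Matrix.toLin' L) volume) = |L.det|⁻¹ * ∫ y, H y := by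
    rw [hmapMeas, integral_smul_measure, ENNReal.toReal_ofReal (abs_nonneg _), abs_inv,
      smul_eq_mul]
  have step3 : ∫ y, H y = |L.det| * ∫ ξ, H (L.mulVec ξ) := by
    rw [← h1, h1']
    field_simp
  have step3' : Integrable H volume ↔ Integrable (fun ξ => H (L.mulVec ξ)) volume := by
    have e1 : Integrable H (Measure.map (Matrix.toLin' L) volume) ↔
        Integrable (H ∘ (Matrix.toLin' L)) volume :=
      integrable_map_measure hHcont.aestronglyMeasurable hTmeas.aemeasurable
    rw [hmapMeas] at e1
    rw [← integrable_smul_measure (μ := (volume : Measure (Fin N → ℝ)))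
      (c := ENNReal.ofReal |L.det⁻¹|) (by simp [abs_pos, hdet]) ENNReal.ofReal_ne_top]
    rw [e1]
    constructor
    · intro h; exact h.congr (by filter_upwards with ξ; simp [Function.comp, Matrix.toLin'_apply])
    · intro h; exact h.congr (by filter_upwards with ξ; simp [Function.comp, Matrix.toLin'_apply])
  -- explicit form of H ∘ L
  have hxi : ∀ ξ : Fin N → ℝ, L⁻¹.mulVec ((L.mulVec ξ + μ) - μ) = ξ := by
    intro ξ
    rw [add_sub_cancel_right, Matrix.mulVec_mulVec, Matrix.nonsing_inv_mul L hL, Matrix.one_mulVec]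
  have hquad : ∀ ξ : Fin N → ℝ,
      ((L.mulVec ξ + μ) - μ) ⬝ᵥ (L * Lᵀ)⁻¹.mulVec ((L.mulVec ξ + μ) - μ) = ξ ⬝ᵥ ξ := by
    intro ξ
    rw [add_sub_cancel_right]
    have hv : L⁻¹ *ᵥ (L *ᵥ ξ) = ξ := by
      rw [Matrix.mulVec_mulVec, Matrix.nonsing_inv_mul L hL, Matrix.one_mulVec]
    rw [Matrix.mul_inv_rev, ← Matrix.mulVec_mulVec, hv, ← Matrix.transpose_nonsing_inv,
      Matrix.dotProduct_mulVec, Matrix.vecMul_transpose, hv]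
  -- value of the density after substitution
  have hconst : (Real.sqrt ((2 * π) ^ N * (L * Lᵀ).det))⁻¹ =
      ((Real.sqrt (2 * π)) ^ N)⁻¹ * |L.det|⁻¹ := by
    rw [Matrix.det_mul, Matrix.det_transpose, ← sq, Real.sqrt_mul (by positivity),
      Real.sqrt_sq_eq_abs, sqrt_pow_nat _ (by positivity), mul_inv]
  have hHval : ∀ ξ : Fin N → ℝ, H (L.mulVec ξ) =
      |L.det|⁻¹ * ∏ i, ((Real.sqrt (2 * π))⁻¹ *
        (g i (ξ i) * Real.exp (-(2⁻¹ * (ξ i) ^ 2)))) := by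
    intro ξ
    have hexp : Real.exp (-(1 / 2) * (ξ ⬝ᵥ ξ)) = ∏ i, Real.exp (-(2⁻¹ * (ξ i) ^ 2)) := by
      rw [← Real.exp_sum]
      congr 1
      rw [dotProduct, Finset.mul_sum]
      apply Finset.sum_congr rfl
      intro i _
      ring
    show ρ (L.mulVec ξ + μ) * F (L.mulVec ξ + μ) = _
    have hFval : F (L.mulVec ξ + μ) = ∏ i, g i (ξ i) := by
      rw [hFdef]
      simp only [hxi ξ]
    have hρval : ρ (L.mulVec ξ + μ) =
        ((Real.sqrt (2 * π)) ^ N)⁻¹ * |L.det|⁻¹ * Real.exp (-(1 / 2) * (ξ ⬝ᵥ ξ)) := by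
      rw [hρ]
      simp only
      rw [hquad ξ, hconst]
    rw [hρval, hFval, hexp]
    rw [Finset.prod_mul_distrib, Finset.prod_mul_distrib, Finset.prod_const,
      Finset.card_univ, Fintype.card_fin, ← inv_pow]
    ring
  -- integrability of the transformed function
  have hIntT : Integrable (fun ξ => H (L.mulVec ξ)) volume := by
    have : Integrable (fun ξ : Fin N → ℝ => ∏ i, ((Real.sqrt (2 * π))⁻¹ *
        (g i (ξ i) * Real.exp (-(2⁻¹ * (ξ i) ^ 2))))) volume := by
      apply MeasureTheory.Integrable.fintype_prod (f := fun i t => (Real.sqrt (2 * π))⁻¹ *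
        (g i t * Real.exp (-(2⁻¹ * t ^ 2))))
      intro i
      exact (hi i).const_mul _
    have h2 := this.const_mul (|L.det|⁻¹)
    exact h2.congr (by filter_upwards with ξ; rw [hHval ξ])
  -- final value computation
  have hval : ∫ ξ, H (L.mulVec ξ) = |L.det|⁻¹ *
      ∏ i, ((Real.sqrt (2 * π))⁻¹ * ∫ t, g i t * Real.exp (-(2⁻¹ * t ^ 2))) := by
    calc ∫ ξ, H (L.mulVec ξ)
        = ∫ ξ : Fin N → ℝ, |L.det|⁻¹ * ∏ i, ((Real.sqrt (2 * π))⁻¹ *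
            (g i (ξ i) * Real.exp (-(2⁻¹ * (ξ i) ^ 2)))) := by
          congr 1; funext ξ; exact hHval ξ
      _ = |L.det|⁻¹ * ∫ ξ : Fin N → ℝ, ∏ i, ((Real.sqrt (2 * π))⁻¹ *
            (g i (ξ i) * Real.exp (-(2⁻¹ * (ξ i) ^ 2)))) := by
          rw [integral_const_mul]
      _ = |L.det|⁻¹ * ∏ i, ∫ t, ((Real.sqrt (2 * π))⁻¹ *
            (g i t * Real.exp (-(2⁻¹ * t ^ 2)))) := by
          rw [MeasureTheory.integral_fintype_prod_volume_eq_prod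
            (f := fun i t => (Real.sqrt (2 * π))⁻¹ * (g i t * Real.exp (-(2⁻¹ * t ^ 2))))]
      _ = |L.det|⁻¹ * ∏ i, ((Real.sqrt (2 * π))⁻¹ * ∫ t, g i t * Real.exp (-(2⁻¹ * t ^ 2))) := by
          congr 1
          apply Finset.prod_congr rfl
          intro i _
          rw [integral_const_mul]
  constructor
  · rw [step1', step2', step3']
    exact hIntT
  · rw [step1, step2, step3, hval]
    rw [← mul_assoc, mul_inv_cancel₀ habs, one_mul]

end Master

section Mono

variable {N : ℕ} (μ : Fin N → ℝ) (L : Matrix (Fin N) (Fin N) ℝ)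

lemma mono_integrable (hL : IsUnit L.det) (m : Fin N → ℕ) :
    Integrable (fun x => ∏ i, ((L⁻¹.mulVec (x - μ)) i) ^ m i) (gaussPi N μ (L * Lᵀ)) :=
  (gauss_master μ L hL (fun i t => t ^ m i) (fun i => continuous_pow _)
    (fun i => integrable_gm (m i))).1

lemma mono_integral (hL : IsUnit L.det) (m : Fin N → ℕ) :
    ∫ x, ∏ i, ((L⁻¹.mulVec (x - μ)) i) ^ m i ∂(gaussPi N μ (L * Lᵀ)) = ∏ i, Gm (m i) :=
  (gauss_master μ L hL (fun i t => t ^ m i) (fun i => continuous_pow _)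
    (fun i => integrable_gm (m i))).2

end Mono

section Comb

variable {N : ℕ}

def eF (i : Fin N) : Fin N → ℕ := fun a => if a = i then 1 else 0

lemma prod_pow_one (v : Fin N → ℝ) (i : Fin N) : ∏ a, v a ^ (eF i a) = v i := by
  have h : ∀ a, v a ^ (eF i a) = if a = i then v a else 1 := by
    intro a; by_cases h : a = i <;> simp [eF, h]
  rw [Finset.prod_congr rfl (fun a _ => h a), Finset.prod_ite_eq' Finset.univ i v]
  simp

lemma prod_pow_add (v : Fin N → ℝ) (m m' : Fin N → ℕ) :
    ∏ a, v a ^ (m a + m' a) = (∏ a, v a ^ m a) * (∏ a, v a ^ m' a) := by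
  rw [← Finset.prod_mul_distrib]; exact Finset.prod_congr rfl fun a _ => pow_add _ _ _

lemma GmProd_one (i : Fin N) : (∏ a, Gm (eF i a)) = 0 :=
  Finset.prod_eq_zero (Finset.mem_univ i) (by simp [eF, Gm_one])

lemma GmProd_two (i j : Fin N) :
    (∏ a, Gm (eF i a + eF j a)) = if i = j then 1 else 0 := by
  by_cases h : i = j
  · subst h
    rw [if_pos rfl]
    apply Finset.prod_eq_one
    intro a _
    by_cases ha : a = i <;> simp [eF, ha, Gm_two, Gm_zero]
  · rw [if_neg h]
    apply Finset.prod_eq_zero (Finset.mem_univ i)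
    simp [eF, h, Gm_one]

lemma GmProd_three (i j k : Fin N) : (∏ a, Gm (eF i a + eF j a + eF k a)) = 0 := by
  by_cases hji : j = i
  · by_cases hki : k = i
    · refine Finset.prod_eq_zero (Finset.mem_univ i) ?_
      simp [eF, hji, hki, Gm_three]
    · refine Finset.prod_eq_zero (Finset.mem_univ k) ?_
      have h1 : ¬ k = j := fun h => hki (h.trans hji)
      simp [eF, hki, h1, Gm_one]
  · by_cases hki : k = i
    · refine Finset.prod_eq_zero (Finset.mem_univ j) ?_
      have h1 : ¬ j = k := fun h => hji (h.trans hki)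
      simp [eF, hji, h1, Gm_one]
    · refine Finset.prod_eq_zero (Finset.mem_univ i) ?_
      have h1 : ¬ i = j := fun h => hji h.symm
      have h2 : ¬ i = k := fun h => hki h.symm
      simp [eF, h1, h2, Gm_one]

lemma GmProd_four (i j k l : Fin N) :
    (∏ a, Gm (eF i a + eF j a + eF k a + eF l a)) =
      (if i = j then (1:ℝ) else 0) * (if k = l then 1 else 0) +
      (if i = k then (1:ℝ) else 0) * (if j = l then 1 else 0) +
      (if i = l then (1:ℝ) else 0) * (if j = k then 1 else 0) := by
  by_cases hij : i = j
  · subst hij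
    by_cases hkl : k = l
    · subst hkl
      by_cases hik : i = k
      · subst hik
        have h : ∀ a : Fin N, Gm (eF i a + eF i a + eF i a + eF i a) =
            if a = i then (3:ℝ) else 1 := by
          intro a; by_cases ha : a = i <;> simp [eF, ha, Gm_four, Gm_zero]
        rw [Finset.prod_congr rfl (fun a _ => h a),
          Finset.prod_ite_eq' Finset.univ i (fun _ => (3:ℝ))]
        norm_num
      · have h : ∀ a : Fin N, Gm (eF i a + eF i a + eF k a + eF k a) = 1 := by
          intro a
          by_cases hai : a = i
          · subst hai
            have : ¬ a = k := hik
            simp [eF, this, Gm_two]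
          · have hki : ¬ k = i := fun h => hik h.symm
            by_cases hak : a = k <;> simp [eF, hai, hak, hki, Gm_two, Gm_zero]
        rw [Finset.prod_congr rfl (fun a _ => h a)]
        simp [hik]
    · -- i = j, k ≠ l : zero
      have hL0 : (∏ a, Gm (eF i a + eF i a + eF k a + eF l a)) = 0 := by
        refine Finset.prod_eq_zero (Finset.mem_univ k) ?_
        have hkl' : ¬ k = l := hkl
        by_cases hki : k = i
        · have hil : ¬ i = l := fun h => hkl' (hki.trans h)
          simp [eF, hki, hkl', hil, Gm_three]
        · simp [eF, hki, hkl', Gm_one]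
      rw [hL0]
      by_cases hik : i = k
      · have hil : ¬ i = l := fun h => hkl (hik.symm.trans h)
        simp [hkl, hil]
      · simp [hkl, hik]
  · by_cases hkl : k = l
    · subst hkl
      have hL0 : (∏ a, Gm (eF i a + eF j a + eF k a + eF k a)) = 0 := by
        refine Finset.prod_eq_zero (Finset.mem_univ i) ?_
        have hij' : ¬ i = j := hij
        by_cases hik : i = k
        · have hkj : ¬ k = j := fun h => hij' (hik.trans h)
          simp [eF, hij', hik, hkj, Gm_three]
        · simp [eF, hij', hik, Gm_one]
      rw [hL0]
      by_cases hik : i = k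
      · have hjk : ¬ j = k := fun h => hij (hik.trans h.symm)
        simp [hij, hjk]
      · simp [hij, hik]
    · -- i ≠ j, k ≠ l
      by_cases hik : i = k
      · subst hik
        by_cases hjl : j = l
        · subst hjl
          have h : ∀ a : Fin N, Gm (eF i a + eF j a + eF i a + eF j a) = 1 := by
            intro a
            by_cases hai : a = i
            · subst hai
              have : ¬ a = j := fun h => hij h
              simp [eF, this, Gm_two]
            · have hji : ¬ j = i := fun h => hij h.symm
              by_cases haj : a = j <;> simp [eF, hai, haj, hji, Gm_two, Gm_zero]
          rw [Finset.prod_congr rfl (fun a _ => h a)]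
          have hji : ¬ j = i := fun h => hij h.symm
          simp [hij, hji]
        · have hL0 : (∏ a, Gm (eF i a + eF j a + eF i a + eF l a)) = 0 := by
            refine Finset.prod_eq_zero (Finset.mem_univ j) ?_
            have hji : ¬ j = i := fun h => hij h.symm
            have hjl' : ¬ j = l := hjl
            simp [eF, hji, hjl', Gm_one]
          rw [hL0]
          have hil : ¬ i = l := fun h => hkl h  -- k = i here
          simp [hij, hjl, hil]
      · by_cases hil : i = l
        · subst hil
          by_cases hjk : j = k
          · subst hjk
            have h : ∀ a : Fin N, Gm (eF i a + eF j a + eF j a + eF i a) = 1 := by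
              intro a
              by_cases hai : a = i
              · subst hai
                have : ¬ a = j := fun h => hij h
                simp [eF, this, Gm_two]
              · have hji : ¬ j = i := fun h => hij h.symm
                by_cases haj : a = j <;> simp [eF, hai, haj, hji, Gm_two, Gm_zero]
            rw [Finset.prod_congr rfl (fun a _ => h a)]
            have hji : ¬ j = i := fun h => hij h.symm
            simp [hij, hji, hik]
          · have hL0 : (∏ a, Gm (eF i a + eF j a + eF k a + eF i a)) = 0 := by
              refine Finset.prod_eq_zero (Finset.mem_univ j) ?_
              have hji : ¬ j = i := fun h => hij h.symm
              have hjk' : ¬ j = k := hjk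
              simp [eF, hji, hjk', Gm_one]
            rw [hL0]
            simp [hij, hik, hjk]
        · have hL0 : (∏ a, Gm (eF i a + eF j a + eF k a + eF l a)) = 0 := by
            refine Finset.prod_eq_zero (Finset.mem_univ i) ?_
            have h1 : ¬ i = j := hij
            simp [eF, h1, hik, hil, Gm_one]
          rw [hL0]
          simp [hij, hik, hil]

end Comb

section Moments

variable {N : ℕ} (μ : Fin N → ℝ) (L : Matrix (Fin N) (Fin N) ℝ)

lemma pt2 (v : Fin N → ℝ) (i j : Fin N) :
    v i * v j = ∏ a, v a ^ (eF i a + eF j a) := by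
  rw [prod_pow_add, prod_pow_one, prod_pow_one]

lemma pt3 (v : Fin N → ℝ) (i j k : Fin N) :
    v i * v j * v k = ∏ a, v a ^ (eF i a + eF j a + eF k a) := by
  rw [prod_pow_add (m := fun a => eF i a + eF j a), prod_pow_one, ← pt2]

lemma pt4 (v : Fin N → ℝ) (i j k l : Fin N) :
    v i * v j * v k * v l = ∏ a, v a ^ (eF i a + eF j a + eF k a + eF l a) := by
  rw [prod_pow_add (m := fun a => eF i a + eF j a + eF k a), prod_pow_one, ← pt3]

lemma int1 (hL : IsUnit L.det) (i : Fin N) :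
    Integrable (fun x => (L⁻¹.mulVec (x - μ)) i) (gaussPi N μ (L * Lᵀ)) := by
  refine (mono_integrable μ L hL (eF i)).congr ?_
  filter_upwards with x
  rw [prod_pow_one]

lemma int2 (hL : IsUnit L.det) (i j : Fin N) :
    Integrable (fun x => (L⁻¹.mulVec (x - μ)) i * (L⁻¹.mulVec (x - μ)) j)
      (gaussPi N μ (L * Lᵀ)) := by
  refine (mono_integrable μ L hL (fun a => eF i a + eF j a)).congr ?_
  filter_upwards with x
  rw [← pt2]

lemma int3 (hL : IsUnit L.det) (i j k : Fin N) :
    Integrable (fun x => (L⁻¹.mulVec (x - μ)) i * (L⁻¹.mulVec (x - μ)) j *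
      (L⁻¹.mulVec (x - μ)) k) (gaussPi N μ (L * Lᵀ)) := by
  refine (mono_integrable μ L hL (fun a => eF i a + eF j a + eF k a)).congr ?_
  filter_upwards with x
  rw [← pt3]

lemma int4 (hL : IsUnit L.det) (i j k l : Fin N) :
    Integrable (fun x => (L⁻¹.mulVec (x - μ)) i * (L⁻¹.mulVec (x - μ)) j *
      (L⁻¹.mulVec (x - μ)) k * (L⁻¹.mulVec (x - μ)) l) (gaussPi N μ (L * Lᵀ)) := by
  refine (mono_integrable μ L hL (fun a => eF i a + eF j a + eF k a + eF l a)).congr ?_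
  filter_upwards with x
  rw [← pt4]

lemma E1 (hL : IsUnit L.det) (i : Fin N) :
    ∫ x, (L⁻¹.mulVec (x - μ)) i ∂(gaussPi N μ (L * Lᵀ)) = 0 := by
  have h := mono_integral μ L hL (eF i)
  rw [GmProd_one] at h
  rw [← h]
  apply integral_congr_ae
  filter_upwards with x
  rw [prod_pow_one]

lemma E2 (hL : IsUnit L.det) (i j : Fin N) :
    ∫ x, (L⁻¹.mulVec (x - μ)) i * (L⁻¹.mulVec (x - μ)) j ∂(gaussPi N μ (L * Lᵀ)) =
      if i = j then 1 else 0 := by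
  have h := mono_integral μ L hL (fun a => eF i a + eF j a)
  rw [GmProd_two] at h
  rw [← h]
  apply integral_congr_ae
  filter_upwards with x
  rw [← pt2]

lemma E3 (hL : IsUnit L.det) (i j k : Fin N) :
    ∫ x, (L⁻¹.mulVec (x - μ)) i * (L⁻¹.mulVec (x - μ)) j * (L⁻¹.mulVec (x - μ)) k
      ∂(gaussPi N μ (L * Lᵀ)) = 0 := by
  have h := mono_integral μ L hL (fun a => eF i a + eF j a + eF k a)
  rw [GmProd_three] at h
  rw [← h]
  apply integral_congr_ae
  filter_upwards with x
  rw [← pt3]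

lemma E4 (hL : IsUnit L.det) (i j k l : Fin N) :
    ∫ x, (L⁻¹.mulVec (x - μ)) i * (L⁻¹.mulVec (x - μ)) j * (L⁻¹.mulVec (x - μ)) k *
      (L⁻¹.mulVec (x - μ)) l ∂(gaussPi N μ (L * Lᵀ)) =
      (if i = j then (1:ℝ) else 0) * (if k = l then 1 else 0) +
      (if i = k then (1:ℝ) else 0) * (if j = l then 1 else 0) +
      (if i = l then (1:ℝ) else 0) * (if j = k then 1 else 0) := by
  have h := mono_integral μ L hL (fun a => eF i a + eF j a + eF k a + eF l a)
  rw [GmProd_four] at h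
  rw [← h]
  apply integral_congr_ae
  filter_upwards with x
  rw [← pt4]

end Moments


section LA

variable {N M : ℕ}

lemma la_main (hM : M = N * (N + 1) / 2)
    (vech : Matrix (Fin N) (Fin N) ℝ → Fin M → ℝ)
    (D : Matrix (Fin N × Fin N) (Fin M) ℝ)
    (hD : ∀ A : Matrix (Fin N) (Fin N) ℝ, A.IsSymm →
      ∀ ij : Fin N × Fin N, (D.mulVec (vech A)) ij = A ij.1 ij.2)
    (R : Matrix (Fin M) (Fin M) ℝ) (hR : R * R = (2⁻¹ : ℝ) • (Dᵀ * D)) :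
    (∀ (m : Fin M) (p : Fin N × Fin N), D (p.2, p.1) m = D p m) ∧ IsUnit R.det := by
  classical
  -- the submodule of "symmetric" vectors
  set Sym : Submodule ℝ (Fin N × Fin N → ℝ) :=
    { carrier := {v | ∀ p : Fin N × Fin N, v (p.2, p.1) = v p}
      add_mem' := by intro u v hu hv p; simp only [Pi.add_apply, hu p, hv p]
      zero_mem' := by intro p; rfl
      smul_mem' := by intro c v hv p; simp only [Pi.smul_apply, hv p] } with hSymdef
  have memSym : ∀ v : (Fin N × Fin N → ℝ), v ∈ Sym ↔ ∀ p : Fin N × Fin N, v (p.2, p.1) = v p :=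
    fun v => Iff.rfl
  -- cardinality of the index set of the upper triangle
  have hcard : Fintype.card {p : Fin N × Fin N // p.1 ≤ p.2} = M := by
    have h1 : Fintype.card {p : Fin N × Fin N // p.1 ≤ p.2} =
        ∑ i : Fin N, Fintype.card {j : Fin N // i ≤ j} := by
      rw [Fintype.card_congr (Equiv.subtypeProdEquivSigmaSubtype (fun (i j : Fin N) => i ≤ j))]
      rw [Fintype.card_sigma]
    have h2 : ∀ i : Fin N, Fintype.card {j : Fin N // i ≤ j} = N - i.val := by
      intro i
      rw [Fintype.card_subtype]
      rw [show Finset.filter (fun j => i ≤ j) Finset.univ = Finset.Ici i by ext a; simp]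
      exact Fin.card_Ici i
    have h3 : ∑ i : Fin N, Fintype.card {j : Fin N // i ≤ j} =
        ∑ r ∈ Finset.range N, (N - r) := by
      rw [Finset.sum_congr rfl (fun i _ => h2 i)]
      exact Fin.sum_univ_eq_sum_range (fun r => N - r) N
    have h4 : ∑ r ∈ Finset.range N, (N - (N - 1 - r)) = ∑ r ∈ Finset.range N, (N - r) :=
      Finset.sum_range_reflect (fun r => N - r) N
    have h5 : ∑ r ∈ Finset.range N, (N - (N - 1 - r)) = (∑ r ∈ Finset.range N, r) + N := by
      rw [Finset.sum_congr rfl (fun r hr => show N - (N - 1 - r) = r + 1 by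
        have := Finset.mem_range.mp hr; omega)]
      rw [Finset.sum_add_distrib]
      simp
    have h6 := Finset.sum_range_id_mul_two N
    have h7 : N * (N + 1) = N * (N - 1) + 2 * N := by
      cases N with
      | zero => simp
      | succ n => simp only [Nat.add_sub_cancel]; ring
    omega
  -- restriction to upper triangle is a linear bijection from Sym
  let r : Sym →ₗ[ℝ] ({p : Fin N × Fin N // p.1 ≤ p.2} → ℝ) :=
    { toFun := fun v q => v.1 q.1
      map_add' := fun _ _ => rfl
      map_smul' := fun _ _ => rfl }
  have hrinj : Function.Injective r := by
    intro u v huv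
    apply Subtype.ext
    funext p
    by_cases h : p.1 ≤ p.2
    · exact congrFun huv ⟨p, h⟩
    · have h2 : p.2 ≤ p.1 := le_of_not_ge h
      have hu := u.2 p
      have hv := v.2 p
      rw [← hu, ← hv]
      exact congrFun huv ⟨(p.2, p.1), h2⟩
  have hrsurj : Function.Surjective r := by
    intro u
    set v : Fin N × Fin N → ℝ := fun p =>
      if h : p.1 ≤ p.2 then u ⟨p, h⟩ else u ⟨(p.2, p.1), le_of_not_ge h⟩ with hvdef
    have hvmem : v ∈ Sym := by
      intro p
      by_cases h1 : p.1 ≤ p.2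
      · by_cases h2 : p.2 ≤ p.1
        · have hpe : p.1 = p.2 := le_antisymm h1 h2
          have hps : (p.2, p.1) = p := by
            ext <;> simp [hpe]
          rw [hps]
        · simp [hvdef, h1, h2]
      · have h2 : p.2 ≤ p.1 := le_of_not_ge h1
        simp [hvdef, h1, h2]
    refine ⟨⟨v, hvmem⟩, ?_⟩
    funext q
    show (if h : q.1.1 ≤ q.1.2 then u ⟨q.1, h⟩ else _) = u q
    rw [dif_pos q.2]
  have hfr : Module.finrank ℝ Sym = M := by
    rw [(LinearEquiv.ofBijective r ⟨hrinj, hrsurj⟩).finrank_eq, Module.finrank_pi, hcard]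
  -- Sym is contained in the range of D
  have hle : Sym ≤ LinearMap.range (Matrix.mulVecLin D) := by
    intro v hv
    have hsymm : (Matrix.of fun i j => v (i, j)).IsSymm := by
      unfold Matrix.IsSymm
      ext i j
      exact hv (i, j)
    refine ⟨vech (Matrix.of fun i j => v (i, j)), ?_⟩
    funext p
    rw [Matrix.mulVecLin_apply, hD _ hsymm p]
    rfl
  have hfrange : Module.finrank ℝ (LinearMap.range (Matrix.mulVecLin D)) = M := by
    refine le_antisymm ?_ ?_
    · have := LinearMap.finrank_range_le (Matrix.mulVecLin D)
      rwa [Module.finrank_pi, Fintype.card_fin] at this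
    · exact le_trans (le_of_eq hfr.symm) (Submodule.finrank_mono hle)
  have hinj : Function.Injective (Matrix.mulVecLin D) := by
    rw [← LinearMap.ker_eq_bot]
    have h := LinearMap.finrank_range_add_finrank_ker (Matrix.mulVecLin D)
    rw [hfrange, Module.finrank_pi, Fintype.card_fin] at h
    exact Submodule.finrank_eq_zero.mp (by omega)
  have hSymeq : Sym = LinearMap.range (Matrix.mulVecLin D) :=
    Submodule.eq_of_le_of_finrank_eq hle (by rw [hfr, hfrange])
  constructor
  · -- columns of D are symmetric
    intro m p
    have hmem : (Matrix.mulVecLin D) (Pi.single m 1) ∈ Sym := by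
      rw [hSymeq]
      exact LinearMap.mem_range_self _ _
    have := hmem p
    rw [Matrix.mulVecLin_apply, Matrix.mulVec_single] at this
    simpa using this
  · -- R is invertible
    have hDTD : (Dᵀ * D).det ≠ 0 := by
      intro h0
      obtain ⟨v, hv0, hv⟩ := Matrix.exists_mulVec_eq_zero_iff.mpr h0
      have hDv : (D.mulVec v) ⬝ᵥ (D.mulVec v) = 0 := by
        have h1 : v ⬝ᵥ ((Dᵀ * D).mulVec v) = 0 := by rw [hv, dotProduct_zero]
        rw [← Matrix.mulVec_mulVec, Matrix.dotProduct_mulVec, Matrix.vecMul_transpose] at h1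
        exact h1
      have hD0 : D.mulVec v = 0 := by
        rw [dotProduct_self_eq_zero] at hDv
        exact hDv
      apply hv0
      apply hinj
      rw [Matrix.mulVecLin_apply, hD0, Matrix.mulVecLin_apply, Matrix.mulVec_zero]
    have hRR : R.det * R.det ≠ 0 := by
      rw [← Matrix.det_mul, hR, Matrix.det_smul]
      apply mul_ne_zero _ hDTD
      positivity
    rw [isUnit_iff_ne_zero]
    exact fun h => hRR (by rw [h, mul_zero])
  done

end LA

/-- **Orthonormality of the indefinite-Gaussian basis.**  With Gaussian measure
`ν = N(μ, Σ)`, `Σ = LLᵀ` a Cholesky factorization, the functions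
`g₁(x) = exp (-L⁻¹(x−μ))` (componentwise) and
`g₂(x) = exp (-√((1/2)DᵀD)·vech (L⁻¹(x−μ)(x−μ)ᵀL⁻ᵀ))` (componentwise) form an orthonormal
family in the indefinite-Gaussian subspace under the Bayes-space inner product:
`⟨g,g⟩ = Identity`.  Here `D` is the duplication matrix (`vec A = D vech A` for symmetric
`A`) and `R = √((1/2)DᵀD)`. -/
theorem indefGaussian_basis_orthonormal (N M : ℕ) (hM : M = N * (N + 1) / 2)
    (μ : Fin N → ℝ) (L : Matrix (Fin N) (Fin N) ℝ) (hL : IsUnit L.det)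
    (vech : Matrix (Fin N) (Fin N) ℝ → Fin M → ℝ)
    (D : Matrix (Fin N × Fin N) (Fin M) ℝ)
    (hD : ∀ A : Matrix (Fin N) (Fin N) ℝ, A.IsSymm →
      ∀ ij : Fin N × Fin N, (D.mulVec (vech A)) ij = A ij.1 ij.2)
    (R : Matrix (Fin M) (Fin M) ℝ) (hR : R * R = (2⁻¹ : ℝ) • (Dᵀ * D)) (hRs : R.IsSymm) :
    (∀ i j : Fin N, bip (gaussPi N μ (L * Lᵀ)) (gOne N μ L i) (gOne N μ L j) =
      if i = j then 1 else 0) ∧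
    (∀ k l : Fin M, bip (gaussPi N μ (L * Lᵀ)) (gTwo N M μ L vech R k) (gTwo N M μ L vech R l) =
      if k = l then 1 else 0) ∧
    (∀ (i : Fin N) (k : Fin M),
      bip (gaussPi N μ (L * Lᵀ)) (gOne N μ L i) (gTwo N M μ L vech R k) = 0) := by
  classical
  obtain ⟨hDsym, hRdet⟩ := la_main hM vech D hD R hR
  set ν := gaussPi N μ (L * Lᵀ) with hν
  set X : (Fin N → ℝ) → Fin N → ℝ := fun x => L⁻¹.mulVec (x - μ) with hXdef
  set B : Matrix (Fin M) (Fin N × Fin N) ℝ := R⁻¹ * Dᵀ with hB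
  -- wrappers for the moment lemmas
  have e1 : ∀ i, ∫ x, X x i ∂ν = 0 := fun i => E1 μ L hL i
  have e2 : ∀ i j, ∫ x, X x i * X x j ∂ν = if i = j then 1 else 0 := fun i j => E2 μ L hL i j
  have e3 : ∀ i j k, ∫ x, X x i * X x j * X x k ∂ν = 0 := fun i j k => E3 μ L hL i j k
  have e4 : ∀ i j k l, ∫ x, X x i * X x j * X x k * X x l ∂ν =
      (if i = j then (1:ℝ) else 0) * (if k = l then 1 else 0) +
      (if i = k then (1:ℝ) else 0) * (if j = l then 1 else 0) +
      (if i = l then (1:ℝ) else 0) * (if j = k then 1 else 0) := fun i j k l => E4 μ L hL i j k l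
  have i2 : ∀ i j, Integrable (fun x => X x i * X x j) ν := fun i j => int2 μ L hL i j
  have i3 : ∀ i j k, Integrable (fun x => X x i * X x j * X x k) ν :=
    fun i j k => int3 μ L hL i j k
  have i4 : ∀ i j k l, Integrable (fun x => X x i * X x j * X x k * X x l) ν :=
    fun i j k l => int4 μ L hL i j k l
  -- pointwise identities
  have hmat : ∀ v : Fin N → ℝ, L⁻¹ * vecMulVec v v * (L⁻¹)ᵀ =
      vecMulVec (L⁻¹.mulVec v) (L⁻¹.mulVec v) := by
    intro v
    ext i j
    simp only [Matrix.mul_apply, Matrix.vecMulVec_apply, Matrix.transpose_apply,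
      Matrix.mulVec, dotProduct, Finset.sum_mul, Finset.mul_sum]
    exact Finset.sum_congr rfl fun a _ => Finset.sum_congr rfl fun b _ => by ring
  have hsymA : ∀ u : Fin N → ℝ, (vecMulVec u u).IsSymm := by
    intro u
    unfold Matrix.IsSymm
    ext i j
    simp [Matrix.vecMulVec_apply, mul_comm]
  -- the quadratic exponent of gTwo
  set W : Fin M → (Fin N → ℝ) → ℝ :=
    fun k x => ∑ p : Fin N × Fin N, (2⁻¹ * B k p) * (X x p.1 * X x p.2) with hWdef
  have hw : ∀ x k, (R.mulVec (vech (L⁻¹ * vecMulVec (x - μ) (x - μ) * (L⁻¹)ᵀ))) k = W k x := by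
    intro x k
    have h1 : L⁻¹ * vecMulVec (x - μ) (x - μ) * (L⁻¹)ᵀ = vecMulVec (X x) (X x) := hmat (x - μ)
    rw [h1]
    have h2 : D.mulVec (vech (vecMulVec (X x) (X x))) = fun p => X x p.1 * X x p.2 := by
      funext p
      rw [hD _ (hsymA (X x)) p, Matrix.vecMulVec_apply]
    have h3 : R.mulVec (R.mulVec (vech (vecMulVec (X x) (X x)))) =
        (2⁻¹ : ℝ) • Dᵀ.mulVec (fun p => X x p.1 * X x p.2) := by
      rw [Matrix.mulVec_mulVec, hR, Matrix.smul_mulVec, ← Matrix.mulVec_mulVec, h2]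
    have h4 : R.mulVec (vech (vecMulVec (X x) (X x))) =
        R⁻¹.mulVec (R.mulVec (R.mulVec (vech (vecMulVec (X x) (X x))))) := by
      rw [Matrix.mulVec_mulVec, Matrix.nonsing_inv_mul R hRdet, Matrix.one_mulVec]
    rw [h4, h3, Matrix.mulVec_smul, Matrix.mulVec_mulVec]
    simp only [Pi.smul_apply, smul_eq_mul, Matrix.mulVec, dotProduct]
    rw [Finset.mul_sum, hWdef]
    exact Finset.sum_congr rfl fun p _ => by ring
  have hBsym : ∀ k (p : Fin N × Fin N), B k (p.2, p.1) = B k p := by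
    intro k p
    simp only [hB, Matrix.mul_apply, Matrix.transpose_apply]
    exact Finset.sum_congr rfl fun m _ => by rw [hDsym m p]
  have hBB : ∀ k l, (∑ p : Fin N × Fin N, B k p * B l p) = if k = l then 2 else 0 := by
    have hDTD2 : Dᵀ * D = (2:ℝ) • (R * R) := by
      rw [hR, smul_smul]; norm_num
    have h1 : B * Bᵀ = (2:ℝ) • (1 : Matrix (Fin M) (Fin M) ℝ) := by
      rw [hB]
      have hBt : (R⁻¹ * Dᵀ)ᵀ = D * R⁻¹ := by
        rw [Matrix.transpose_mul, Matrix.transpose_transpose,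
          Matrix.transpose_nonsing_inv, hRs.eq]
      calc (R⁻¹ * Dᵀ) * (R⁻¹ * Dᵀ)ᵀ = R⁻¹ * Dᵀ * (D * R⁻¹) := by rw [hBt]
        _ = R⁻¹ * (Dᵀ * D) * R⁻¹ := by rw [← Matrix.mul_assoc, Matrix.mul_assoc R⁻¹ Dᵀ D]
        _ = R⁻¹ * ((2:ℝ) • (R * R)) * R⁻¹ := by rw [hDTD2]
        _ = (2:ℝ) • (R⁻¹ * (R * R) * R⁻¹) := by
            rw [Matrix.mul_smul, Matrix.smul_mul]
        _ = (2:ℝ) • (1 : Matrix (Fin M) (Fin M) ℝ) := by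
            rw [show R⁻¹ * (R * R) * R⁻¹ = R⁻¹ * R * (R * R⁻¹) by
              rw [← Matrix.mul_assoc, ← Matrix.mul_assoc, Matrix.mul_assoc (R⁻¹ * R) R R⁻¹]]
            rw [Matrix.nonsing_inv_mul R hRdet, one_mul, Matrix.mul_nonsing_inv R hRdet]
    intro k l
    have h2 := congrFun (congrFun h1 k) l
    rw [Matrix.mul_apply] at h2
    simp only [Matrix.transpose_apply] at h2
    rw [h2]
    by_cases h : k = l <;> simp [Matrix.smul_apply, Matrix.one_apply, h]
  -- logs
  have hlog1 : ∀ i x, Real.log (gOne N μ L i x) = -(X x i) := by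
    intro i x
    unfold gOne
    rw [Real.log_exp]
  have hlog2 : ∀ k x, Real.log (gTwo N M μ L vech R k x) = -(W k x) := by
    intro k x
    unfold gTwo
    rw [Real.log_exp, hw]
  -- integral of log gOne
  have hEg1 : ∀ i, ∫ x, Real.log (gOne N μ L i x) ∂ν = 0 := by
    intro i
    have h : ∫ x, Real.log (gOne N μ L i x) ∂ν = ∫ x, -(X x i) ∂ν :=
      integral_congr_ae (Filter.Eventually.of_forall fun x => hlog1 i x)
    rw [h, integral_neg, e1 i, neg_zero]
  -- expectation of W
  set S : Fin M → ℝ :=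
    fun k => ∑ p : Fin N × Fin N, (2⁻¹ * B k p) * (if p.1 = p.2 then (1:ℝ) else 0) with hSdef
  have hEW : ∀ k, ∫ x, W k x ∂ν = S k := by
    intro k
    rw [hWdef]
    rw [integral_finset_sum _ (fun p _ => (i2 p.1 p.2).const_mul _)]
    exact Finset.sum_congr rfl fun p _ => by rw [integral_const_mul, e2 p.1 p.2]
  have hEg2 : ∀ k, ∫ x, Real.log (gTwo N M μ L vech R k x) ∂ν = -(S k) := by
    intro k
    have h : ∫ x, Real.log (gTwo N M μ L vech R k x) ∂ν = ∫ x, -(W k x) ∂ν :=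
      integral_congr_ae (Filter.Eventually.of_forall fun x => hlog2 k x)
    rw [h, integral_neg, hEW k]
  refine ⟨?_, ?_, ?_⟩
  · -- part 1
    intro i j
    unfold bip
    have h1 : ∫ x, Real.log (gOne N μ L i x) * Real.log (gOne N μ L j x) ∂ν =
        ∫ x, X x i * X x j ∂ν :=
      integral_congr_ae (Filter.Eventually.of_forall fun x => by simp only [hlog1]; ring)
    rw [h1, e2 i j, hEg1 i, hEg1 j]
    ring
  · -- part 2
    intro k l
    unfold bip
    have h1 : ∫ x, Real.log (gTwo N M μ L vech R k x) * Real.log (gTwo N M μ L vech R l x) ∂ν =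
        ∫ x, W k x * W l x ∂ν :=
      integral_congr_ae (Filter.Eventually.of_forall fun x => by simp only [hlog2]; ring)
    have h2 : ∫ x, W k x * W l x ∂ν = S k * S l + (if k = l then 1 else 0) := by
      have hfun : (fun x => W k x * W l x) = fun x => ∑ p : Fin N × Fin N,
          ∑ q : Fin N × Fin N, ((2⁻¹ * B k p) * (2⁻¹ * B l q)) *
            (X x p.1 * X x p.2 * X x q.1 * X x q.2) := by
        funext x
        rw [hWdef]
        simp only
        rw [Finset.sum_mul_sum]
        exact Finset.sum_congr rfl fun p _ => Finset.sum_congr rfl fun q _ => by ring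
      rw [hfun]
      rw [integral_finset_sum _ (fun p _ => integrable_finset_sum _
        (fun q _ => (i4 p.1 p.2 q.1 q.2).const_mul _))]
      have hsum : ∀ p : Fin N × Fin N, ∫ x, ∑ q : Fin N × Fin N,
          ((2⁻¹ * B k p) * (2⁻¹ * B l q)) * (X x p.1 * X x p.2 * X x q.1 * X x q.2) ∂ν =
          ∑ q : Fin N × Fin N, ((2⁻¹ * B k p) * (2⁻¹ * B l q)) *
            ((if p.1 = p.2 then (1:ℝ) else 0) * (if q.1 = q.2 then 1 else 0) +
             (if p.1 = q.1 then (1:ℝ) else 0) * (if p.2 = q.2 then 1 else 0) +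
             (if p.1 = q.2 then (1:ℝ) else 0) * (if p.2 = q.1 then 1 else 0)) := by
        intro p
        rw [integral_finset_sum _ (fun q _ => (i4 p.1 p.2 q.1 q.2).const_mul _)]
        exact Finset.sum_congr rfl fun q _ => by
          rw [integral_const_mul, e4 p.1 p.2 q.1 q.2]
      rw [Finset.sum_congr rfl fun p _ => hsum p]
      -- split into three sums
      have hsplit : ∀ p : Fin N × Fin N, ∑ q : Fin N × Fin N,
          ((2⁻¹ * B k p) * (2⁻¹ * B l q)) *
            ((if p.1 = p.2 then (1:ℝ) else 0) * (if q.1 = q.2 then 1 else 0) +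
             (if p.1 = q.1 then (1:ℝ) else 0) * (if p.2 = q.2 then 1 else 0) +
             (if p.1 = q.2 then (1:ℝ) else 0) * (if p.2 = q.1 then 1 else 0)) =
          ((2⁻¹ * B k p) * (if p.1 = p.2 then (1:ℝ) else 0)) * S l +
          (2⁻¹ * B k p) * (2⁻¹ * B l p) + (2⁻¹ * B k p) * (2⁻¹ * B l p) := by
        intro p
        have hq2 : ∀ q : Fin N × Fin N, (if p.1 = q.1 then (1:ℝ) else 0) *
            (if p.2 = q.2 then 1 else 0) = if p = q then 1 else 0 := by
          intro q
          by_cases h1 : p.1 = q.1 <;> by_cases h2 : p.2 = q.2 <;>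
            simp [Prod.ext_iff, h1, h2]
        have hq3 : ∀ q : Fin N × Fin N, (if p.1 = q.2 then (1:ℝ) else 0) *
            (if p.2 = q.1 then 1 else 0) = if (p.2, p.1) = q then 1 else 0 := by
          intro q
          by_cases h1 : p.1 = q.2 <;> by_cases h2 : p.2 = q.1 <;>
            simp [Prod.ext_iff, h1, h2]
        simp only [hq2, hq3, mul_add]
        rw [Finset.sum_add_distrib, Finset.sum_add_distrib]
        congr 1
        · congr 1
          · -- first sum gives the S l term
            rw [hSdef]
            simp only
            rw [Finset.mul_sum]
            exact Finset.sum_congr rfl fun q _ => by ring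
          · -- second sum : only q = p survives
            have : ∀ q : Fin N × Fin N, ((2⁻¹ * B k p) * (2⁻¹ * B l q)) *
                (if p = q then (1:ℝ) else 0) =
                if p = q then ((2⁻¹ * B k p) * (2⁻¹ * B l q)) else 0 := by
              intro q; split <;> simp
            rw [Finset.sum_congr rfl fun q _ => this q, Finset.sum_ite_eq]
            simp
        · -- third sum : only q = (p.2, p.1) survives
          have : ∀ q : Fin N × Fin N, ((2⁻¹ * B k p) * (2⁻¹ * B l q)) *
              (if (p.2, p.1) = q then (1:ℝ) else 0) =
              if (p.2, p.1) = q then ((2⁻¹ * B k p) * (2⁻¹ * B l q)) else 0 := by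
            intro q; split <;> simp
          rw [Finset.sum_congr rfl fun q _ => this q, Finset.sum_ite_eq]
          simp [hBsym l p]
      rw [Finset.sum_congr rfl fun p _ => hsplit p]
      rw [Finset.sum_add_distrib, Finset.sum_add_distrib]
      have hS1 : ∑ p : Fin N × Fin N, ((2⁻¹ * B k p) * (if p.1 = p.2 then (1:ℝ) else 0)) * S l
          = S k * S l := by
        rw [hSdef]
        simp only
        rw [← Finset.sum_mul]
      have hS2 : ∑ p : Fin N × Fin N, (2⁻¹ * B k p) * (2⁻¹ * B l p) =
          4⁻¹ * (if k = l then 2 else 0) := by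
        rw [← hBB k l, Finset.mul_sum]
        exact Finset.sum_congr rfl fun p _ => by ring
      rw [hS1, hS2]
      by_cases h : k = l <;> simp [h] <;> ring
    rw [h1, h2, hEg2 k, hEg2 l]
    ring
  · -- part 3 : cross terms vanish
    intro i k
    unfold bip
    have h1 : ∫ x, Real.log (gOne N μ L i x) * Real.log (gTwo N M μ L vech R k x) ∂ν =
        ∫ x, ∑ p : Fin N × Fin N, (2⁻¹ * B k p) * (X x i * X x p.1 * X x p.2) ∂ν := by
      apply integral_congr_ae
      apply Filter.Eventually.of_forall
      intro x
      simp only [hlog1, hlog2, hWdef]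
      rw [neg_mul_neg, Finset.mul_sum]
      exact Finset.sum_congr rfl fun p _ => by ring
    rw [h1, integral_finset_sum _ (fun p _ => (i3 i p.1 p.2).const_mul _)]
    have h2 : ∀ p : Fin N × Fin N, ∫ x, (2⁻¹ * B k p) * (X x i * X x p.1 * X x p.2) ∂ν = 0 := by
      intro p
      rw [integral_const_mul, e3 i p.1 p.2, mul_zero]
    rw [Finset.sum_congr rfl fun p _ => h2 p, Finset.sum_const_zero, hEg1 i]
    ring
end
end

section
/- For p = c·exp(-φ) ∈ B² with Gaussian measure ν = N(μ, Σ), Σ = LLᵀ, the first block of projection coordinates onto the indefinite-Gaussian subspace satisfies α₁ = ⟨g₁, p⟩ = Lᵀ·E_ν[∂φ/∂xᵀ], the Cholesky-transposed expected gradient of φ. -/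
open MeasureTheory Real Matrix
open scoped ENNReal NNReal

noncomputable section

/-! ### Auxiliary lemmas -/

namespace IndefGaussianAux

open Filter

/-- A real integrable function with a limit at `+∞` has limit `0`. -/
lemma limit_zero_of_integrable {f : ℝ → ℝ} {A : ℝ} (hf : Integrable f)
    (h : Tendsto f atTop (nhds A)) : A = 0 := by
  by_contra hA
  have h2 : ∀ᶠ x in atTop, |A|/2 ≤ |f x| := by
    filter_upwards [h.eventually (eventually_abs_sub_lt A
      (by positivity : (0:ℝ) < |A|/2))] with x hx
    have := abs_sub_abs_le_abs_sub A (f x)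
    linarith [abs_sub_comm (f x) A ▸ hx]
  obtain ⟨b, hb⟩ := h2.exists_forall_of_atTop
  have hconst : IntegrableOn (fun _ : ℝ => |A|/2) (Set.Ioi b) volume := by
    refine Integrable.mono' (hf.abs.integrableOn) aestronglyMeasurable_const ?_
    filter_upwards [ae_restrict_mem measurableSet_Ioi] with x hx
    simpa [abs_abs, abs_of_nonneg (by positivity : (0:ℝ) ≤ |A|/2)] using (hb x (le_of_lt hx))
  rw [integrableOn_const_iff, enorm_eq_zero] at hconst
  rcases hconst with h1 | h2
  · exact hA (by simpa using abs_eq_zero.mp (by linarith [abs_nonneg A]))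
  · simp [Real.volume_Ioi] at h2

lemma limit_zero_of_integrable_atBot {f : ℝ → ℝ} {A : ℝ} (hf : Integrable f)
    (h : Tendsto f atBot (nhds A)) : A = 0 := by
  have : Tendsto (fun x : ℝ => f (-x)) atTop (nhds A) := h.comp tendsto_neg_atTop_atBot
  exact limit_zero_of_integrable (by simpa using hf.comp_neg) this

/-- One-dimensional Stein-type lemma: the integral of the derivative of an integrable
differentiable function with integrable derivative vanishes. -/
lemma integral_deriv_zero {f g : ℝ → ℝ} (hd : ∀ x, HasDerivAt f (g x) x)
    (hf : Integrable f) (hg : Integrable g) : ∫ x, g x = 0 := by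
  have hfc : ∀ a b : ℝ, ∫ t in a..b, g t = f b - f a := fun a b =>
    intervalIntegral.integral_eq_sub_of_hasDerivAt (fun x _ => hd x) hg.intervalIntegrable
  have htop : Tendsto f atTop (nhds (f 0 + ∫ t in Set.Ioi 0, g t)) := by
    have := intervalIntegral_tendsto_integral_Ioi 0 hg.integrableOn (tendsto_id (α := ℝ))
    have : Tendsto (fun b : ℝ => f 0 + ∫ t in (0:ℝ)..b, g t) atTop
        (nhds (f 0 + ∫ t in Set.Ioi 0, g t)) := tendsto_const_nhds.add this
    refine this.congr fun b => ?_
    rw [hfc 0 b]; ring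
  have hbot : Tendsto f atBot (nhds (f 0 - ∫ t in Set.Iic 0, g t)) := by
    have := intervalIntegral_tendsto_integral_Iic 0 hg.integrableOn (tendsto_id (α := ℝ))
    have : Tendsto (fun a : ℝ => f 0 - ∫ t in a..(0:ℝ), g t) atBot
        (nhds (f 0 - ∫ t in Set.Iic 0, g t)) := tendsto_const_nhds.sub this
    refine this.congr fun a => ?_
    rw [hfc a 0]; ring
  have h1 := limit_zero_of_integrable hf htop
  have h2 := limit_zero_of_integrable_atBot hf hbot
  have := intervalIntegral.integral_Iic_add_Ioi (b := (0:ℝ)) (μ := volume)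
    hg.integrableOn hg.integrableOn
  rw [← this]; linarith

lemma update_insertNth {n : ℕ} (j : Fin (n+1)) (r : Fin n → ℝ) (t s : ℝ) :
    Function.update (Fin.insertNth j t r : Fin (n+1) → ℝ) j s
      = (Fin.insertNth j s r : Fin (n+1) → ℝ) := by
  refine funext (Fin.succAboveCases j ?_ ?_)
  · simp
  · intro m
    simp [Function.update_of_ne (Fin.succAbove_ne j m)]

/-- Multivariate Stein-type lemma: the integral over `ℝᴺ` of the partial derivative (along
lines in the `j`-th coordinate) of an integrable function with integrable partial
derivative vanishes. -/
lemma integral_line_deriv_zero {N : ℕ} (j : Fin N) {f g : (Fin N → ℝ) → ℝ}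
    (hd : ∀ (x : Fin N → ℝ) (t : ℝ),
      HasDerivAt (fun s => f (Function.update x j s)) (g (Function.update x j t)) t)
    (hf : Integrable f (volume : Measure (Fin N → ℝ)))
    (hg : Integrable g (volume : Measure (Fin N → ℝ))) : ∫ x, g x = 0 := by
  match N, j with
  | n + 1, j =>
  have hd' : ∀ (r : Fin n → ℝ) (t : ℝ),
      HasDerivAt (fun s => f (Fin.insertNth j s r)) (g (Fin.insertNth j t r)) t := by
    intro r t
    have h1 := hd (Fin.insertNth j t r) t
    have h2 : Function.update (Fin.insertNth j t r : Fin (n+1) → ℝ) j t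
        = Fin.insertNth j t r := update_insertNth j r t t
    rw [h2] at h1
    refine h1.congr_of_eventuallyEq (Filter.Eventually.of_forall fun s => ?_)
    show f (Fin.insertNth j s r) = f (Function.update (Fin.insertNth j t r) j s)
    rw [update_insertNth]
  have hmp := measurePreserving_piFinSuccAbove (fun _ : Fin (n+1) => (volume : Measure ℝ)) j
  set e := MeasurableEquiv.piFinSuccAbove (fun _ : Fin (n+1) => ℝ) j with he
  have hsymm : ∀ p : ℝ × (Fin n → ℝ), e.symm p = Fin.insertNth j p.1 p.2 := fun p => rfl
  have hInt : Integrable (fun p : ℝ × (Fin n → ℝ) => g (e.symm p))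
      ((volume : Measure ℝ).prod volume) :=
    ((hmp.symm e).integrable_comp_emb e.symm.measurableEmbedding).mpr hg
  have hIntf : Integrable (fun p : ℝ × (Fin n → ℝ) => f (e.symm p))
      ((volume : Measure ℝ).prod volume) :=
    ((hmp.symm e).integrable_comp_emb e.symm.measurableEmbedding).mpr hf
  have hEq : ∫ x, g x = ∫ p : ℝ × (Fin n → ℝ), g (e.symm p) ∂((volume : Measure ℝ).prod volume) :=
    ((hmp.symm e).integral_comp e.symm.measurableEmbedding g).symm
  rw [hEq, integral_prod_symm _ hInt]
  have hae1 := hInt.prod_left_ae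
  have hae2 := hIntf.prod_left_ae
  rw [show (0:ℝ) = ∫ (r : Fin n → ℝ), (0:ℝ) by simp]
  refine integral_congr_ae ?_
  filter_upwards [hae1, hae2] with r hr1 hr2
  exact integral_deriv_zero (fun t => hd' r t) (by simpa [hsymm] using hr2)
    (by simpa [hsymm] using hr1)

variable {N : ℕ}

lemma cont_mulVec (A : Matrix (Fin N) (Fin N) ℝ) (μ : Fin N → ℝ) (k : Fin N) :
    Continuous fun x : Fin N → ℝ => A.mulVec (x - μ) k := by
  simp only [Matrix.mulVec, dotProduct]
  exact continuous_finset_sum _ fun m _ =>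
    continuous_const.mul ((continuous_apply m).sub continuous_const)

lemma cont_q (A : Matrix (Fin N) (Fin N) ℝ) (μ : Fin N → ℝ) :
    Continuous fun x : Fin N → ℝ => ∑ k, (A.mulVec (x - μ) k) ^ 2 :=
  continuous_finset_sum _ fun k _ => (cont_mulVec A μ k).pow 2

lemma gauss_integrable (μ : Fin N → ℝ) (L : Matrix (Fin N) (Fin N) ℝ) (hL : IsUnit L.det)
    {b : ℝ} (hb : 0 < b) :
    Integrable (fun x : Fin N → ℝ => Real.exp (-(b * ∑ k, (L⁻¹.mulVec (x - μ) k) ^ 2)))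
      (volume : Measure (Fin N → ℝ)) := by
  set q : (Fin N → ℝ) → ℝ := fun x => ∑ k, (L⁻¹.mulVec (x - μ) k) ^ 2 with hqdef
  have hq0 : ∀ x, 0 ≤ q x := fun x => Finset.sum_nonneg fun k _ => sq_nonneg _
  set C : Fin N → ℝ := fun i => (∑ k, (L i k) ^ 2) + 1 with hC
  have hCpos : ∀ i, 0 < C i := fun i =>
    lt_add_of_le_of_pos (Finset.sum_nonneg fun k _ => sq_nonneg _) one_pos
  set d : Fin N → ℝ := fun i => b / ((N + 1) * C i) with hd
  have hdpos : ∀ i, 0 < d i := fun i => by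
    have := hCpos i
    apply div_pos hb
    positivity
  have hbound : ∀ (x : Fin N → ℝ) i, (x i - μ i) ^ 2 ≤ C i * q x := by
    intro x i
    have hrec : x - μ = L.mulVec (L⁻¹.mulVec (x - μ)) := by
      rw [Matrix.mulVec_mulVec, Matrix.mul_nonsing_inv L hL, Matrix.one_mulVec]
    have hxi : x i - μ i = ∑ k, L i k * (L⁻¹.mulVec (x - μ)) k := by
      have := congrFun hrec i
      simpa [Matrix.mulVec, dotProduct] using this
    rw [hxi]
    calc (∑ k, L i k * (L⁻¹.mulVec (x - μ)) k) ^ 2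
        ≤ (∑ k, (L i k) ^ 2) * ∑ k, ((L⁻¹.mulVec (x - μ)) k) ^ 2 :=
          Finset.sum_mul_sq_le_sq_mul_sq _ _ _
      _ ≤ C i * q x := by
          apply mul_le_mul_of_nonneg_right _ (hq0 x)
          simp [hC]
  have hsum : ∀ x : Fin N → ℝ, ∑ i, d i * (x i - μ i) ^ 2 ≤ b * q x := by
    intro x
    calc ∑ i, d i * (x i - μ i) ^ 2 ≤ ∑ i : Fin N, b / (N + 1) * q x := by
          apply Finset.sum_le_sum
          intro i _
          have h1 : d i * (x i - μ i) ^ 2 ≤ d i * (C i * q x) :=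
            mul_le_mul_of_nonneg_left (hbound x i) (hdpos i).le
          refine h1.trans (le_of_eq ?_)
          have := (hCpos i).ne'
          rw [hd]
          field_simp
      _ ≤ b * q x := by
          rw [Finset.sum_const, Finset.card_univ, Fintype.card_fin, nsmul_eq_mul]
          have h1 : (N : ℝ) / (N + 1) ≤ 1 := by
            rw [div_le_one (by positivity)]; linarith
          have hbq : (0:ℝ) ≤ b * q x := mul_nonneg hb.le (hq0 x)
          calc (N:ℝ) * (b / (N + 1) * q x) = ((N:ℝ) / (N + 1)) * (b * q x) := by ring
            _ ≤ 1 * (b * q x) := mul_le_mul_of_nonneg_right h1 hbq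
            _ = b * q x := one_mul _
  have hdom : Integrable (fun x : Fin N → ℝ => ∏ i, Real.exp (-(d i * (x i - μ i) ^ 2)))
      (volume : Measure (Fin N → ℝ)) := by
    apply Integrable.fintype_prod (f := fun i (s : ℝ) => Real.exp (-(d i * (s - μ i) ^ 2)))
    intro i
    have : Integrable (fun s : ℝ => Real.exp (-(d i) * s ^ 2)) volume :=
      integrable_exp_neg_mul_sq (hdpos i)
    simpa [neg_mul] using this.comp_sub_right (μ i)
  refine hdom.mono' ?_ ?_
  · have : Continuous fun x : Fin N → ℝ => Real.exp (-(b * q x)) :=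
      Real.continuous_exp.comp ((continuous_const.mul (cont_q L⁻¹ μ)).neg)
    exact this.aestronglyMeasurable
  · filter_upwards with x
    rw [Real.norm_eq_abs, abs_of_pos (Real.exp_pos _)]
    have : ∏ i, Real.exp (-(d i * (x i - μ i) ^ 2))
        = Real.exp (∑ i, -(d i * (x i - μ i) ^ 2)) := (Real.exp_sum _ _).symm
    rw [this]
    apply Real.exp_le_exp.mpr
    have := hsum x
    rw [Finset.sum_neg_distrib]
    linarith

lemma gauss_integrable_linear (μ : Fin N → ℝ) (L : Matrix (Fin N) (Fin N) ℝ)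
    (hL : IsUnit L.det) (i : Fin N) :
    Integrable (fun x : Fin N → ℝ =>
      L⁻¹.mulVec (x - μ) i * Real.exp (-(1/2 * ∑ k, (L⁻¹.mulVec (x - μ) k) ^ 2)))
      (volume : Measure (Fin N → ℝ)) := by
  set q : (Fin N → ℝ) → ℝ := fun x => ∑ k, (L⁻¹.mulVec (x - μ) k) ^ 2 with hqdef
  have hq0 : ∀ x, 0 ≤ q x := fun x => Finset.sum_nonneg fun k _ => sq_nonneg _
  have hyq : ∀ x, (L⁻¹.mulVec (x - μ) i) ^ 2 ≤ q x := fun x =>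
    Finset.single_le_sum (f := fun k => (L⁻¹.mulVec (x - μ) k) ^ 2)
      (fun k _ => sq_nonneg _) (Finset.mem_univ i)
  have hdom := (gauss_integrable μ L hL (b := 1/4) (by norm_num)).const_mul 4
  refine hdom.mono' ?_ ?_
  · exact (((cont_mulVec L⁻¹ μ i).mul
      (Real.continuous_exp.comp ((continuous_const.mul (cont_q L⁻¹ μ)).neg))).aestronglyMeasurable)
  · filter_upwards with x
    rw [Real.norm_eq_abs, abs_mul, abs_of_pos (Real.exp_pos _)]
    have habs : |L⁻¹.mulVec (x - μ) i| ≤ 1 + q x := by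
      have h1 : |L⁻¹.mulVec (x - μ) i| ≤ 1 + (L⁻¹.mulVec (x - μ) i) ^ 2 := by
        nlinarith [abs_nonneg (L⁻¹.mulVec (x - μ) i), sq_abs (L⁻¹.mulVec (x - μ) i)]
      linarith [hyq x]
    have hexp : (1 + q x) * Real.exp (-(1/2 * q x)) ≤ 4 * Real.exp (-(1/4 * q x)) := by
      rw [show -(1/2 * q x) = -(1/4 * q x) + -(1/4 * q x) by ring, Real.exp_add]
      have h2 : 1 + q x ≤ 4 * Real.exp (1/4 * q x) := by
        have := Real.add_one_le_exp (1/4 * q x)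
        nlinarith [hq0 x]
      have h3 : Real.exp (-(1/4 * q x)) * Real.exp (1/4 * q x) = 1 := by
        rw [← Real.exp_add]; simp
      have h4 : (0:ℝ) < Real.exp (-(1/4 * q x)) := Real.exp_pos _
      nlinarith [Real.exp_pos (1/4 * q x)]
    calc |L⁻¹.mulVec (x - μ) i| * Real.exp (-(1/2 * q x))
        ≤ (1 + q x) * Real.exp (-(1/2 * q x)) :=
          mul_le_mul_of_nonneg_right habs (Real.exp_pos _).le
      _ ≤ 4 * Real.exp (-(1/4 * q x)) := hexp

lemma update_eq_affine (j : Fin N) (x : Fin N → ℝ) (s : ℝ) :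
    Function.update x j s = Function.update x j 0 + s • (Pi.single j 1 : Fin N → ℝ) := by
  funext k
  rcases eq_or_ne k j with rfl | hk
  · simp
  · simp [Function.update_of_ne hk, Pi.single_eq_of_ne hk]

lemma quad_line_deriv (M : Matrix (Fin N) (Fin N) ℝ) (hM : Mᵀ = M)
    (a v μ : Fin N → ℝ) (t : ℝ) :
    HasDerivAt (fun s : ℝ => (a + s • v - μ) ⬝ᵥ M.mulVec (a + s • v - μ))
      (2 * (M.mulVec (a + t • v - μ) ⬝ᵥ v)) t := by
  have hw : ∀ s : ℝ, a + s • v - μ = (a - μ) + s • v := fun s => add_sub_right_comm a (s • v) μ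
  set w := a - μ with hwdef
  have hgen : ∀ u z : Fin N → ℝ, M.mulVec u ⬝ᵥ z = u ⬝ᵥ M.mulVec z := by
    intro u z
    rw [dotProduct_comm, dotProduct_mulVec, ← Matrix.mulVec_transpose, hM,
      dotProduct_comm]
  have hexp : ∀ s : ℝ, (a + s • v - μ) ⬝ᵥ M.mulVec (a + s • v - μ)
      = (w ⬝ᵥ M.mulVec w) + (v ⬝ᵥ M.mulVec w + w ⬝ᵥ M.mulVec v) * s
        + (v ⬝ᵥ M.mulVec v) * s ^ 2 := by
    intro s
    rw [hw s]
    simp only [Matrix.mulVec_add, Matrix.mulVec_smul, add_dotProduct,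
      dotProduct_add, smul_dotProduct, dotProduct_smul, smul_eq_mul]
    ring
  have hD : HasDerivAt (fun s : ℝ => (w ⬝ᵥ M.mulVec w)
      + (v ⬝ᵥ M.mulVec w + w ⬝ᵥ M.mulVec v) * s + (v ⬝ᵥ M.mulVec v) * s ^ 2)
      ((v ⬝ᵥ M.mulVec w + w ⬝ᵥ M.mulVec v) + (v ⬝ᵥ M.mulVec v) * (2 * t ^ 1)) t := by
    have h1 := (hasDerivAt_id t).const_mul (v ⬝ᵥ M.mulVec w + w ⬝ᵥ M.mulVec v)
    have h2 := (hasDerivAt_pow 2 t).const_mul (v ⬝ᵥ M.mulVec v)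
    have h3 := (h1.const_add (w ⬝ᵥ M.mulVec w)).add h2
    simpa [mul_comm, Pi.add_def] using h3
  have heq : (v ⬝ᵥ M.mulVec w + w ⬝ᵥ M.mulVec v) + (v ⬝ᵥ M.mulVec v) * (2 * t ^ 1)
      = 2 * (M.mulVec (a + t • v - μ) ⬝ᵥ v) := by
    rw [hw t]
    simp only [Matrix.mulVec_add, Matrix.mulVec_smul, add_dotProduct,
      smul_dotProduct, smul_eq_mul]
    have e1 := hgen w v
    have e2 := hgen v v
    have e3 : v ⬝ᵥ M.mulVec w = w ⬝ᵥ M.mulVec v :=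
      (dotProduct_comm v (M.mulVec w)).trans (hgen w v)
    linear_combination e3 - 2 * e1 - 2 * t * e2
  rw [← heq]
  exact hD.congr_of_eventuallyEq (Filter.Eventually.of_forall fun s => hexp s)

lemma hasDerivAt_comp_update {f : (Fin N → ℝ) → ℝ} (hf : Differentiable ℝ f)
    (j : Fin N) (x : Fin N → ℝ) (t : ℝ) :
    HasDerivAt (fun s => f (Function.update x j s))
      (fderiv ℝ f (Function.update x j t) (Pi.single j 1)) t := by
  have h1 : HasDerivAt (fun s : ℝ => Function.update x j 0 + s • (Pi.single j 1 : Fin N → ℝ))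
      (Pi.single j 1) t := by
    simpa using ((hasDerivAt_id t).smul_const (Pi.single j 1 : Fin N → ℝ)).const_add
      (Function.update x j 0)
  have h2 : HasDerivAt (fun s : ℝ => (Function.update x j s : Fin N → ℝ))
      (Pi.single j 1) t := by
    exact h1.congr_of_eventuallyEq (Filter.Eventually.of_forall fun s => update_eq_affine j x s)
  simpa [update_eq_affine j x t, Function.comp_def] using
    ((hf (Function.update x j t)).hasFDerivAt).comp_hasDerivAt t h2

lemma matfacts (L : Matrix (Fin N) (Fin N) ℝ) (hL : IsUnit L.det) :
    ((L * Lᵀ)⁻¹)ᵀ = (L * Lᵀ)⁻¹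
    ∧ (∀ v : Fin N → ℝ, L⁻¹.mulVec v = Lᵀ.mulVec ((L * Lᵀ)⁻¹.mulVec v))
    ∧ (∀ v : Fin N → ℝ, v ⬝ᵥ (L * Lᵀ)⁻¹.mulVec v = ∑ k, (L⁻¹.mulVec v k)^2)
    ∧ (∀ (v : Fin N → ℝ) (j : Fin N),
        (L * Lᵀ)⁻¹.mulVec v j = ∑ k, L⁻¹ k j * (L⁻¹.mulVec v k)) := by
  have hMinv : (L * Lᵀ)⁻¹ = (L⁻¹)ᵀ * L⁻¹ := by
    rw [Matrix.mul_inv_rev, Matrix.transpose_nonsing_inv]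
  have hsym : ((L * Lᵀ)⁻¹)ᵀ = (L * Lᵀ)⁻¹ := by
    rw [Matrix.transpose_nonsing_inv, Matrix.transpose_mul, Matrix.transpose_transpose]
  refine ⟨hsym, ?_, ?_, ?_⟩
  · intro v
    rw [Matrix.mulVec_mulVec, hMinv, ← Matrix.mul_assoc, ← Matrix.transpose_mul,
      Matrix.nonsing_inv_mul L hL, Matrix.transpose_one, Matrix.one_mul]
  · intro v
    rw [hMinv, ← Matrix.mulVec_mulVec, Matrix.mulVec_transpose, dotProduct_comm,
      ← dotProduct_mulVec]
    simp [dotProduct, pow_two]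
  · intro v j
    rw [hMinv, ← Matrix.mulVec_mulVec]
    simp [Matrix.mulVec_transpose, Matrix.vecMul, dotProduct, Matrix.mulVec]

end IndefGaussianAux

open IndefGaussianAux

/-- **First-block projection coordinates onto the indefinite-Gaussian subspace.**
For `p = c·exp (-φ)` in Bayes space with Gaussian measure `ν = N(μ, Σ)`, `Σ = LLᵀ`,
the first block of projection coordinates satisfies `α₁ = ⟨g₁, p⟩ = Lᵀ·E_ν[∂φ/∂xᵀ]`,
the Cholesky-transposed expected gradient of `φ`. -/
theorem indefGaussian_first_coordinates (N : ℕ)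
    (μ : Fin N → ℝ) (L : Matrix (Fin N) (Fin N) ℝ) (hL : IsUnit L.det)
    (c : ℝ) (hc : 0 < c) (φ : (Fin N → ℝ) → ℝ) (hφ : Differentiable ℝ φ)
    (hint₁ : Integrable φ (gaussPi N μ (L * Lᵀ)))
    (hint₂ : ∀ i, Integrable (fun x => (L⁻¹.mulVec (x - μ)) i * φ x) (gaussPi N μ (L * Lᵀ)))
    (hint₃ : ∀ j, Integrable (fun x => fderiv ℝ φ x (Pi.single j 1)) (gaussPi N μ (L * Lᵀ))) :
    ∀ i, bip (gaussPi N μ (L * Lᵀ)) (gOne N μ L i) (fun x => c * Real.exp (-(φ x))) =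
      (Lᵀ.mulVec fun j => ∫ x, fderiv ℝ φ x (Pi.single j 1) ∂(gaussPi N μ (L * Lᵀ))) i := by
  obtain ⟨hMsym, hLM, hq, hMrow⟩ := matfacts L hL
  set κ : ℝ := (Real.sqrt ((2 * π) ^ N * (L * Lᵀ).det))⁻¹ with hκdef
  set ρ : (Fin N → ℝ) → ℝ :=
    fun x => κ * Real.exp (-(1 / 2) * ((x - μ) ⬝ᵥ (L * Lᵀ)⁻¹.mulVec (x - μ))) with hρdef
  have hν : gaussPi N μ (L * Lᵀ) = volume.withDensity fun x => ENNReal.ofReal (ρ x) := rfl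
  have hκ0 : 0 ≤ κ := inv_nonneg.2 (Real.sqrt_nonneg _)
  have hρ0 : ∀ x, 0 ≤ ρ x := fun x => mul_nonneg hκ0 (Real.exp_pos _).le
  have hρc : Continuous ρ := by
    have h1 : Continuous fun x : Fin N → ℝ => (x - μ) ⬝ᵥ (L * Lᵀ)⁻¹.mulVec (x - μ) := by
      have h2 : (fun x : Fin N → ℝ => (x - μ) ⬝ᵥ (L * Lᵀ)⁻¹.mulVec (x - μ))
          = fun x => ∑ k, (L⁻¹.mulVec (x - μ) k)^2 := funext fun x => hq (x - μ)
      rw [h2]; exact cont_q L⁻¹ μ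
    exact continuous_const.mul (Real.continuous_exp.comp (continuous_const.mul h1))
  -- transfer of integrals and integrability from `gaussPi` to `volume`
  have hdensm : Measurable fun x => (ρ x).toNNReal :=
    measurable_real_toNNReal.comp hρc.measurable
  have hsmul : ∀ g : (Fin N → ℝ) → ℝ,
      (fun x => (ρ x).toNNReal • g x) = fun x => ρ x * g x := by
    intro g; funext x
    rw [NNReal.smul_def, Real.coe_toNNReal _ (hρ0 x)]
    rfl
  have hIE : ∀ g : (Fin N → ℝ) → ℝ,
      ∫ x, g x ∂(gaussPi N μ (L * Lᵀ)) = ∫ x, ρ x * g x := by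
    intro g
    rw [hν, show (fun x => ENNReal.ofReal (ρ x)) = fun x => ((ρ x).toNNReal : ℝ≥0∞) from rfl,
      integral_withDensity_eq_integral_smul hdensm g, hsmul g]
  have hII : ∀ g : (Fin N → ℝ) → ℝ,
      Integrable g (gaussPi N μ (L * Lᵀ)) ↔ Integrable (fun x => ρ x * g x) volume := by
    intro g
    rw [hν, show (fun x => ENNReal.ofReal (ρ x)) = fun x => ((ρ x).toNNReal : ℝ≥0∞) from rfl,
      integrable_withDensity_iff_integrable_smul hdensm, hsmul g]
  -- volume integrability facts
  have hIρ : Integrable ρ volume := by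
    have h := (gauss_integrable μ L hL (b := (1:ℝ)/2) (by norm_num)).const_mul κ
    refine h.congr (Filter.Eventually.of_forall fun x => ?_)
    show κ * Real.exp (-(1/2 * ∑ k, (L⁻¹.mulVec (x - μ) k) ^ 2)) = ρ x
    rw [hρdef]
    show _ = κ * Real.exp (-(1 / 2) * ((x - μ) ⬝ᵥ (L * Lᵀ)⁻¹.mulVec (x - μ)))
    rw [hq (x - μ), neg_mul]
  have hIa : ∀ k, Integrable (fun x => L⁻¹.mulVec (x - μ) k * ρ x) volume := by
    intro k
    have h := (gauss_integrable_linear μ L hL k).const_mul κ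
    refine h.congr (Filter.Eventually.of_forall fun x => ?_)
    show κ * (L⁻¹.mulVec (x - μ) k * Real.exp (-(1/2 * ∑ m, (L⁻¹.mulVec (x - μ) m) ^ 2)))
      = L⁻¹.mulVec (x - μ) k * ρ x
    rw [hρdef]
    show _ = L⁻¹.mulVec (x - μ) k *
      (κ * Real.exp (-(1 / 2) * ((x - μ) ⬝ᵥ (L * Lᵀ)⁻¹.mulVec (x - μ))))
    rw [hq (x - μ), neg_mul]
    ring
  have hIM : ∀ j, Integrable (fun x => (L * Lᵀ)⁻¹.mulVec (x - μ) j * ρ x) volume := by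
    intro j
    have h : Integrable (fun x => ∑ k, L⁻¹ k j * (L⁻¹.mulVec (x - μ) k * ρ x)) volume :=
      integrable_finset_sum _ fun k _ => (hIa k).const_mul _
    refine h.congr (Filter.Eventually.of_forall fun x => ?_)
    show (∑ k, L⁻¹ k j * (L⁻¹.mulVec (x - μ) k * ρ x)) = (L * Lᵀ)⁻¹.mulVec (x - μ) j * ρ x
    rw [hMrow (x - μ) j, Finset.sum_mul]
    exact Finset.sum_congr rfl fun k _ => by ring
  -- derivative of ρ along coordinate lines
  have hρd : ∀ (x : Fin N → ℝ) (j : Fin N) (t : ℝ),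
      HasDerivAt (fun s => ρ (Function.update x j s))
        (-((L * Lᵀ)⁻¹.mulVec (Function.update x j t - μ) j * ρ (Function.update x j t))) t := by
    intro x j t
    have hup : ∀ s : ℝ, Function.update x j s
        = Function.update x j 0 + s • (Pi.single j 1 : Fin N → ℝ) := update_eq_affine j x
    have h1 := (((quad_line_deriv ((L * Lᵀ)⁻¹) hMsym (Function.update x j 0)
        (Pi.single j 1) μ t).const_mul (-(1/2) : ℝ)).exp).const_mul κ
    have h2 : HasDerivAt (fun s => ρ (Function.update x j 0 + s • (Pi.single j 1 : Fin N → ℝ)))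
        (-((L * Lᵀ)⁻¹.mulVec (Function.update x j 0 + t • (Pi.single j 1 : Fin N → ℝ) - μ) j *
          ρ (Function.update x j 0 + t • (Pi.single j 1 : Fin N → ℝ)))) t := by
      have h3 : (fun s : ℝ => ρ (Function.update x j 0 + s • (Pi.single j 1 : Fin N → ℝ)))
          = fun s => κ * Real.exp (-(1/2) *
            ((Function.update x j 0 + s • (Pi.single j 1 : Fin N → ℝ) - μ) ⬝ᵥ
              (L * Lᵀ)⁻¹.mulVec (Function.update x j 0 + s • (Pi.single j 1 : Fin N → ℝ) - μ))) := by
        funext s; rw [hρdef]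
      have h4 : ρ (Function.update x j 0 + t • (Pi.single j 1 : Fin N → ℝ))
          = κ * Real.exp (-(1/2) *
            ((Function.update x j 0 + t • (Pi.single j 1 : Fin N → ℝ) - μ) ⬝ᵥ
              (L * Lᵀ)⁻¹.mulVec (Function.update x j 0 + t • (Pi.single j 1 : Fin N → ℝ) - μ))) := by
        rw [hρdef]
      rw [h3, h4]
      refine h1.congr_deriv ?_
      rw [dotProduct_single]
      ring
    rw [hup t]
    refine h2.congr_of_eventuallyEq (Filter.Eventually.of_forall fun s => ?_)
    show ρ (Function.update x j s)
      = ρ (Function.update x j 0 + s • (Pi.single j 1 : Fin N → ℝ))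
    rw [hup s]
  -- Stein identity for the density itself (centering)
  have hSA : ∀ j, ∫ x, (L * Lᵀ)⁻¹.mulVec (x - μ) j * ρ x = 0 := by
    intro j
    have h0 : ∫ x, -((L * Lᵀ)⁻¹.mulVec (x - μ) j * ρ x) = 0 := by
      refine integral_line_deriv_zero j (f := ρ)
        (g := fun x => -((L * Lᵀ)⁻¹.mulVec (x - μ) j * ρ x)) ?_ hIρ (hIM j).neg
      intro x t
      exact hρd x j t
    rw [integral_neg] at h0
    exact neg_eq_zero.mp h0
  -- integrability of the φ-terms over volume
  have hIφρ : Integrable (fun x => φ x * ρ x) volume :=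
    ((hII φ).mp hint₁).congr (Filter.Eventually.of_forall fun x => mul_comm _ _)
  have hIdφ : ∀ j, Integrable (fun x => fderiv ℝ φ x (Pi.single j 1) * ρ x) volume := fun j =>
    ((hII _).mp (hint₃ j)).congr (Filter.Eventually.of_forall fun x => mul_comm _ _)
  have hIyφρ : ∀ k, Integrable (fun x => L⁻¹.mulVec (x - μ) k * φ x * ρ x) volume := by
    intro k
    refine ((hII _).mp (hint₂ k)).congr (Filter.Eventually.of_forall fun x => ?_)
    show ρ x * (L⁻¹.mulVec (x - μ) k * φ x) = L⁻¹.mulVec (x - μ) k * φ x * ρ x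
    ring
  have hIMφρ : ∀ j, Integrable (fun x => (L * Lᵀ)⁻¹.mulVec (x - μ) j * (φ x * ρ x)) volume := by
    intro j
    have h : Integrable (fun x => ∑ k, L⁻¹ k j * (L⁻¹.mulVec (x - μ) k * φ x * ρ x)) volume :=
      integrable_finset_sum _ fun k _ => (hIyφρ k).const_mul _
    refine h.congr (Filter.Eventually.of_forall fun x => ?_)
    show (∑ k, L⁻¹ k j * (L⁻¹.mulVec (x - μ) k * φ x * ρ x))
      = (L * Lᵀ)⁻¹.mulVec (x - μ) j * (φ x * ρ x)
    rw [hMrow (x - μ) j, Finset.sum_mul]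
    exact Finset.sum_congr rfl fun k _ => by ring
  -- Stein identity with the test function φ
  have hSC : ∀ j, ∫ x, fderiv ℝ φ x (Pi.single j 1) * ρ x
      = ∫ x, (L * Lᵀ)⁻¹.mulVec (x - μ) j * (φ x * ρ x) := by
    intro j
    have h0 : ∫ x, (fderiv ℝ φ x (Pi.single j 1) * ρ x
        - (L * Lᵀ)⁻¹.mulVec (x - μ) j * (φ x * ρ x)) = 0 := by
      refine integral_line_deriv_zero j (f := fun x => φ x * ρ x)
        (g := fun x => fderiv ℝ φ x (Pi.single j 1) * ρ x
          - (L * Lᵀ)⁻¹.mulVec (x - μ) j * (φ x * ρ x)) ?_ hIφρ ((hIdφ j).sub (hIMφρ j))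
      intro x t
      have h1 := (hasDerivAt_comp_update hφ j x t).mul (hρd x j t)
      refine h1.congr_deriv ?_
      ring
    rw [integral_sub (hIdφ j) (hIMφρ j)] at h0
    linarith
  intro i
  have hIaν : Integrable (fun x => L⁻¹.mulVec (x - μ) i) (gaussPi N μ (L * Lᵀ)) :=
    (hII _).mpr ((hIa i).congr (Filter.Eventually.of_forall fun x => mul_comm _ _))
  have hyi : ∀ x : Fin N → ℝ,
      L⁻¹.mulVec (x - μ) i = ∑ j, L j i * (L * Lᵀ)⁻¹.mulVec (x - μ) j := by
    intro x
    rw [hLM (x - μ)]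
    simp [Matrix.mulVec, dotProduct, Matrix.transpose_apply]
  have hE1 : ∫ x, L⁻¹.mulVec (x - μ) i ∂(gaussPi N μ (L * Lᵀ)) = 0 := by
    rw [hIE]
    have hfun : (fun x => ρ x * L⁻¹.mulVec (x - μ) i)
        = fun x => ∑ j, L j i * ((L * Lᵀ)⁻¹.mulVec (x - μ) j * ρ x) := by
      funext x
      rw [hyi x, Finset.mul_sum]
      exact Finset.sum_congr rfl fun j _ => by ring
    rw [hfun, integral_finset_sum _ (fun j _ => ((hIM j).const_mul _))]
    refine Finset.sum_eq_zero fun j _ => ?_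
    rw [integral_const_mul, hSA j, mul_zero]
  have hE2 : ∫ x, L⁻¹.mulVec (x - μ) i * φ x ∂(gaussPi N μ (L * Lᵀ))
      = ∑ j, L j i * ∫ x, fderiv ℝ φ x (Pi.single j 1) ∂(gaussPi N μ (L * Lᵀ)) := by
    rw [hIE]
    have hfun : (fun x => ρ x * (L⁻¹.mulVec (x - μ) i * φ x))
        = fun x => ∑ j, L j i * ((L * Lᵀ)⁻¹.mulVec (x - μ) j * (φ x * ρ x)) := by
      funext x
      rw [hyi x, Finset.sum_mul, Finset.mul_sum]
      exact Finset.sum_congr rfl fun j _ => by ring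
    rw [hfun, integral_finset_sum _ (fun j _ => ((hIMφρ j).const_mul _))]
    refine Finset.sum_congr rfl fun j _ => ?_
    rw [integral_const_mul, ← hSC j, hIE]
    have : (fun x => ρ x * fderiv ℝ φ x (Pi.single j 1))
        = fun x => fderiv ℝ φ x (Pi.single j 1) * ρ x := funext fun x => mul_comm _ _
    rw [this]
  -- final algebra
  have hlog1 : ∀ x, Real.log (gOne N μ L i x) = -(L⁻¹.mulVec (x - μ) i) := by
    intro x
    simp [gOne, Real.log_exp]
  have hlog2 : ∀ x : Fin N → ℝ, Real.log (c * Real.exp (-(φ x))) = Real.log c - φ x := by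
    intro x
    rw [Real.log_mul (ne_of_gt hc) (Real.exp_ne_zero _), Real.log_exp]
    ring
  have hT2 : ∫ x, Real.log (gOne N μ L i x) ∂(gaussPi N μ (L * Lᵀ)) = 0 := by
    simp only [hlog1]
    rw [integral_neg, hE1, neg_zero]
  have hT1 : ∫ x, Real.log (gOne N μ L i x) * Real.log (c * Real.exp (-(φ x)))
        ∂(gaussPi N μ (L * Lᵀ))
      = ∫ x, L⁻¹.mulVec (x - μ) i * φ x ∂(gaussPi N μ (L * Lᵀ))
        - Real.log c * ∫ x, L⁻¹.mulVec (x - μ) i ∂(gaussPi N μ (L * Lᵀ)) := by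
    have hfun : (fun x => Real.log (gOne N μ L i x) * Real.log (c * Real.exp (-(φ x))))
        = fun x => L⁻¹.mulVec (x - μ) i * φ x - Real.log c * L⁻¹.mulVec (x - μ) i := by
      funext x
      rw [hlog1 x, hlog2 x]
      ring
    rw [hfun, integral_sub (hint₂ i) (hIaν.const_mul _), integral_const_mul]
  simp only [bip]
  rw [hT1, hT2, hE1, hE2, mul_zero, sub_zero, zero_mul, sub_zero]
  simp [Matrix.mulVec, dotProduct, Matrix.transpose_apply]
end
end
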